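/- arXiv:2005.07814 — 5 statements merged into one kernel-verified Lean document; each statement's English description precedes it below -/
import Mathlib

section
/- Suppose the query sets S_1,...,S_t are all contiguous intervals of {1,...,1/δ} and the prior is uniform (π_i(0) = δ). Then the Bayesian posterior at time t is a simple function with at most 2t+1 intervals: there exists a partition of {1,...,1/δ} into disjoint contiguous intervals J_0^{(t)}, ..., J_{2t}^{(t)} such that for every u and every i ∈ J_u^{(t)}, π_i(t) = π_{J_u^{(t)}}(t)/|J_u^{(t)}|, where π_J = Σ_{i∈J} π_i. -/
open MeasureTheory Filter

namespace SearchPaper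

noncomputable section

/-- Likelihood of observing `y` when the indicator of the target being in the
query set is `x`, for a binary symmetric channel with crossover probability `q`. -/
def lik (q : ℝ) (x y : Bool) : ℝ := if x = y then 1 - q else q

/-- Crossover probability `p(δ|S|)` of a query set `S` (here `δ = 1/n`). -/
def crossover (p : ℝ → ℝ) (n : ℕ) (S : Finset (Fin n)) : ℝ := p ((S.card : ℝ) / n)

variable {n : ℕ}

/-- Probability of observing `y` given the posterior `π` and query set `S`. -/
def obsProb (p : ℝ → ℝ) (S : Finset (Fin n)) (π : Fin n → ℝ) (y : Bool) : ℝ :=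
  ∑ i, π i * lik (crossover p n S) (decide (i ∈ S)) y

/-- Bayes rule update of the posterior upon observing `y`. -/
def bayesUpdate (p : ℝ → ℝ) (S : Finset (Fin n)) (π : Fin n → ℝ) (y : Bool) (i : Fin n) : ℝ :=
  π i * lik (crossover p n S) (decide (i ∈ S)) y / obsProb p S π y

/-- Posterior process under a (deterministic stationary) strategy `γ`, along the
observation path `y`, starting from the uniform prior. -/
def posterior (p : ℝ → ℝ) (γ : (Fin n → ℝ) → Finset (Fin n)) (y : ℕ → Bool) :
    ℕ → Fin n → ℝ
  | 0 => fun _ => (n : ℝ)⁻¹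
  | t + 1 => bayesUpdate p (γ (posterior p γ y t)) (posterior p γ y t) (y t)

/-- Posterior process with an arbitrary prescribed sequence of query sets. -/
def posteriorSeq (p : ℝ → ℝ) (S : ℕ → Finset (Fin n)) (y : ℕ → Bool) :
    ℕ → Fin n → ℝ
  | 0 => fun _ => (n : ℝ)⁻¹
  | t + 1 => bayesUpdate p (S t) (posteriorSeq p S y t) (y t)

/-- Probability of the observation path `y 0, ..., y (t-1)` under strategy `γ`. -/
def pathProb (p : ℝ → ℝ) (γ : (Fin n → ℝ) → Finset (Fin n)) (y : ℕ → Bool) : ℕ → ℝ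
  | 0 => 1
  | t + 1 => pathProb p γ y t * obsProb p (γ (posterior p γ y t)) (posterior p γ y t) (y t)

/-- Extension of a finite observation path to an infinite one. -/
def extPath {t : ℕ} (y : Fin t → Bool) : ℕ → Bool := fun s => if h : s < t then y ⟨s, h⟩ else false

open Classical in
/-- Probability that the posterior at time `t` satisfies the predicate `φ`. -/
def probAt (p : ℝ → ℝ) (γ : (Fin n → ℝ) → Finset (Fin n)) (t : ℕ)
    (φ : (Fin n → ℝ) → Prop) : ℝ :=
  ∑ y : Fin t → Bool,
    if φ (posterior p γ (extPath y) t) then pathProb p γ (extPath y) t else 0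

open Classical in
/-- Expected value of the variable-length stopping time
`τ = min {t : max_i π_i(t) > 1 - ε}`, computed as `∑_{t≥0} P(τ > t)`. -/
def expectedTau (p : ℝ → ℝ) (γ : (Fin n → ℝ) → Finset (Fin n)) (ε : ℝ) : ℝ :=
  ∑' t : ℕ, ∑ y : Fin t → Bool,
    if ∀ s ≤ t, ∀ i, posterior p γ (extPath y) s i ≤ 1 - ε
    then pathProb p γ (extPath y) t else 0

open Classical in
/-- Probability that the declaration `θ̂ = argmax_i π_i(τ)` made at the variable-length
stopping time `τ = min {t : max_i π_i(t) > 1 - ε}` differs from the target `θ`. -/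
def errorProb (p : ℝ → ℝ) (γ : (Fin n → ℝ) → Finset (Fin n)) (ε : ℝ) : ℝ :=
  ∑' t : ℕ, ∑ y : Fin t → Bool,
    if (∀ s < t, ∀ i, posterior p γ (extPath y) s i ≤ 1 - ε) ∧
        (∃ i, 1 - ε < posterior p γ (extPath y) t i)
    then pathProb p γ (extPath y) t * (1 - ⨆ i, posterior p γ (extPath y) t i) else 0

/-- Kullback–Leibler divergence `D(Bern(a) ‖ Bern(b))`. -/
def klBern (a b : ℝ) : ℝ := a * Real.log (a / b) + (1 - a) * Real.log ((1 - a) / (1 - b))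

/-- `C₁(x) = D(Bern(x) ‖ Bern(1 - x))`. -/
def C1 (x : ℝ) : ℝ := klBern x (1 - x)

/-- `I(q, x)`: the mutual information between the input `X ~ Bern(q)` and the output of a
binary symmetric channel with crossover probability `x`. -/
def mutInfo (q x : ℝ) : ℝ :=
  q * klBern (1 - x) (q * (1 - x) + (1 - q) * x) +
    (1 - q) * klBern x (q * (1 - x) + (1 - q) * x)

/-- KL divergence between two distributions on a finite type. -/
def klFin {Y : Type*} [Fintype Y] (P Q : Y → ℝ) : ℝ := ∑ y, P y * Real.log (P y / Q y)

/-- Extrinsic Jensen–Shannon divergence of the posterior `π` with query set `S`. -/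
def EJS (p : ℝ → ℝ) (S : Finset (Fin n)) (π : Fin n → ℝ) : ℝ :=
  ∑ i, π i *
    klFin (fun y => lik (crossover p n S) (decide (i ∈ S)) y)
      (fun y => ∑ j ∈ Finset.univ.erase i,
        π j / (1 - π i) * lik (crossover p n S) (decide (j ∈ S)) y)

/-- `π̃ = 1 - 1/(1 + max{log(1/δ), log(1/ε)})` with `δ = 1/n`. -/
def piTilde (n : ℕ) (ε : ℝ) : ℝ := 1 - 1 / (1 + max (Real.log n) (Real.log (1 / ε)))

/-- Standing assumptions on the measurement-noise function `p` : on `(0,1)` it takes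
values in `(0, 1/2)`, and it is nondecreasing and continuous there. -/
def NoiseOK (p : ℝ → ℝ) : Prop :=
  (∀ x ∈ Set.Ioo (0 : ℝ) 1, p x ∈ Set.Ioo (0 : ℝ) (1 / 2)) ∧
    MonotoneOn p (Set.Ioo 0 1) ∧ ContinuousOn p (Set.Ioo 0 1)

/-- The (0-indexed) discrete interval `{i : a ≤ i < b}` as a query set. -/
def intervalFromTo (n a b : ℕ) : Finset (Fin n) :=
  Finset.univ.filter (fun i : Fin n => a ≤ (i : ℕ) ∧ (i : ℕ) < b)

/-- Total posterior mass of a set of bins. -/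
def mass (π : Fin n → ℝ) (S : Finset (Fin n)) : ℝ := ∑ i ∈ S, π i

/-- `sortPM`: sort the posterior in descending order via a permutation `σ`, pick
`k* = argmin_k |∑_{j≤k} π↓_j - 1/2|` and query the `k*` bins of largest posterior. -/
def IsSortPM (γ : (Fin n → ℝ) → Finset (Fin n)) : Prop :=
  ∀ π : Fin n → ℝ, ∃ σ : Equiv.Perm (Fin n), Antitone (fun j => π (σ j)) ∧
    ∃ k ∈ Finset.Icc 1 n,
      (∀ k' ∈ Finset.Icc 1 n,
        |(∑ j ∈ Finset.univ.filter (fun j : Fin n => (j : ℕ) < k), π (σ j)) - 1 / 2| ≤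
          |(∑ j ∈ Finset.univ.filter (fun j : Fin n => (j : ℕ) < k'), π (σ j)) - 1 / 2|) ∧
      γ π = Finset.univ.filter (fun i => ((σ.symm i : Fin n) : ℕ) < k)

/-- The hierarchical (dyadic) query set `H_l^m` (0-indexed), for resolution `2^L`. -/
def hset (n L l m : ℕ) : Finset (Fin n) :=
  intervalFromTo n (m * 2 ^ (L - l)) ((m + 1) * 2 ^ (L - l))

/-- `hiePM`: find the deepest level `l*` whose best node carries posterior mass at least
`1/2`, let `m*` be an argmax node at that level, and query, among this node and its two
children, the one whose posterior mass is closest to `1/2`. -/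
def IsHiePM (L : ℕ) (γ : (Fin n → ℝ) → Finset (Fin n)) : Prop :=
  ∀ π : Fin n → ℝ, ∃ lstar ≤ L, ∃ mstar < 2 ^ lstar,
    1 / 2 ≤ mass π (hset n L lstar mstar) ∧
    (∀ l ≤ L, ∀ m < 2 ^ l, 1 / 2 ≤ mass π (hset n L l m) → l ≤ lstar) ∧
    (∀ m < 2 ^ lstar, mass π (hset n L lstar m) ≤ mass π (hset n L lstar mstar)) ∧
    ((lstar = L ∧ γ π = hset n L L mstar) ∨
      (lstar < L ∧
        ∃ c ∈ [(lstar, mstar), (lstar + 1, 2 * mstar), (lstar + 1, 2 * mstar + 1)],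
          (∀ c' ∈ [(lstar, mstar), (lstar + 1, 2 * mstar), (lstar + 1, 2 * mstar + 1)],
            |mass π (hset n L c.1 c.2) - 1 / 2| ≤ |mass π (hset n L c'.1 c'.2) - 1 / 2|) ∧
          γ π = hset n L c.1 c.2))

/-- `dyaPM`: find the deepest level `l*` and node `m*` as in `hiePM`, then apply
posterior matching within that node: query the interval starting at the node's left
endpoint whose posterior mass is closest to `1/2`. -/
def IsDyaPM (L : ℕ) (γ : (Fin n → ℝ) → Finset (Fin n)) : Prop :=
  ∀ π : Fin n → ℝ, ∃ lstar ≤ L, ∃ mstar < 2 ^ lstar,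
    1 / 2 ≤ mass π (hset n L lstar mstar) ∧
    (∀ l ≤ L, ∀ m < 2 ^ l, 1 / 2 ≤ mass π (hset n L l m) → l ≤ lstar) ∧
    (∀ m < 2 ^ lstar, mass π (hset n L lstar m) ≤ mass π (hset n L lstar mstar)) ∧
    ∃ k ∈ Finset.Icc (mstar * 2 ^ (L - lstar) + 1) n,
      (∀ k' ∈ Finset.Icc (mstar * 2 ^ (L - lstar) + 1) n,
        |mass π (intervalFromTo n (mstar * 2 ^ (L - lstar)) k) - 1 / 2| ≤
          |mass π (intervalFromTo n (mstar * 2 ^ (L - lstar)) k') - 1 / 2|) ∧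
      γ π = intervalFromTo n (mstar * 2 ^ (L - lstar)) k

/-- `x ↦ x log(x/(1-x))`: one summand of the average log-likelihood. -/
def llr (x : ℝ) : ℝ := x * Real.log (x / (1 - x))

/-- The average log-likelihood of the vector `v` coarsely binned into `a` consecutive
bins of size `b` each. -/
def binnedU (n a b : ℕ) (v : Fin n → ℝ) : ℝ :=
  ∑ q ∈ Finset.range a, llr (∑ i ∈ intervalFromTo n (q * b) ((q + 1) * b), v i)

/-- The average log-likelihood `U(π) = ∑_i π_i log(π_i/(1-π_i))`. -/
def avgLL (π : Fin n → ℝ) : ℝ := ∑ i, llr (π i)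

/-- The Shannon entropy `H(π) = -∑_i π_i log π_i`. -/
def entropy (π : Fin n → ℝ) : ℝ := -∑ i, π i * Real.log (π i)

/-- The constant `K_s` (with `B₁ = Bern(1 - p(1/2))`, `B₀ = Bern(p(1/2))`). -/
def Ks (p : ℝ → ℝ) : ℝ :=
  max (1 / 2 * klBern (1 / 4 * (1 - p (1 / 2)) + 3 / 4 * p (1 / 2)) (p (1 / 2)))
    (1 / 8 * klBern (1 - p (1 / 2)) (3 / 4 * (1 - p (1 / 2)) + 1 / 4 * p (1 / 2)))

/-- The constant `K_h`. -/
def Kh (p : ℝ → ℝ) : ℝ :=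
  min (mutInfo (1 / 3) (p (1 / 2)))
    (2 / 3 * klBern (1 / 3 * (1 - p (1 / 2)) + 2 / 3 * p (1 / 2)) (p (1 / 2)))

/-- `f(ρ) = ρ D(B₁ ‖ (3/4)B₁ + (1/4)B₀)` where `B₁ = Bern(1-q)`, `B₀ = Bern(q)`. -/
def fK (q ρ : ℝ) : ℝ := ρ * klBern (1 - q) (3 / 4 * (1 - q) + 1 / 4 * q)

/-- `g(ρ) = (1/2-ρ) D((1-4ρ)B₁ + 4ρB₀ ‖ (1/2+ρ)B₁ + (1/2-ρ)B₀)`. -/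
def gK (q ρ : ℝ) : ℝ :=
  (1 / 2 - ρ) *
    klBern ((1 - 4 * ρ) * (1 - q) + 4 * ρ * q) ((1 / 2 + ρ) * (1 - q) + (1 / 2 - ρ) * q)

/-- The constant `K_d`. -/
def Kd (p : ℝ → ℝ) : ℝ :=
  min (sInf ((fun ρ => max (fK (p (1 / 2)) ρ) (gK (p (1 / 2)) ρ)) '' Set.Icc (0 : ℝ) (1 / 4)))
    (min (sInf (fK (p (1 / 2)) '' Set.Icc (1 / 4 : ℝ) (1 / 2)))
      (1 / 4 * klBern (1 / 4 * (1 - p (1 / 2)) + 3 / 4 * p (1 / 2)) (p (1 / 2))))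

/-- The remainder `f_{R,E}(ε,δ)` of Fact 1 (Theorem 1 of Naghshvar–Javidi). -/
def fRem (p : ℝ → ℝ) (R E δ ε : ℝ) : ℝ :=
  Real.log (Real.log (1 / (δ * ε))) / R + 1 / E + 96 / (R * E) * ((1 - p δ) / p δ) ^ 2

/-- The remainder `g_{R,E}(ε,δ)` of the total-probability lemma. -/
def gRem (p : ℝ → ℝ) (R : ℝ → ℝ) (E k₀ E₀ α δ ε : ℝ) : ℝ :=
  k₀ * Real.exp (-E₀) / ((1 - Real.exp (-E₀)) * Real.log (1 / (δ * ε)) ^ E₀) *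
      ((⌈Real.log (Real.log (1 / (δ * ε)))⌉₊ : ℝ) + Real.log (1 / δ) / R (1 / 2) +
        Real.log (1 / ε) / E + fRem p (R (1 / 2)) E δ ε) +
    k₀ * Real.exp (-2 * E₀) / ((1 - Real.exp (-E₀)) ^ 2 * Real.log (1 / (δ * ε)) ^ (2 * E₀)) +
    (⌈Real.log (Real.log (1 / (δ * ε)))⌉₊ : ℝ) + fRem p (R α) E δ ε

end

end SearchPaper
lemma bayesUpdate_congr {n : ℕ} (p : ℝ → ℝ) (S : Finset (Fin n)) (π : Fin n → ℝ) (y : Bool)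
    (i j : Fin n) (hπ : π i = π j) (hS : i ∈ S ↔ j ∈ S) :
    SearchPaper.bayesUpdate p S π y i = SearchPaper.bayesUpdate p S π y j := by
  unfold SearchPaper.bayesUpdate
  rw [hπ, show (decide (i ∈ S)) = decide (j ∈ S) by simp [hS]]

lemma cuts_exist (n : ℕ) (hn : 1 ≤ n) (p : ℝ → ℝ) (S : ℕ → Finset (Fin n)) (y : ℕ → Bool)
    (t : ℕ) (hS : ∀ s < t, ∃ a b : Fin n, S s = Finset.Icc a b) :
    ∃ E : Finset ℕ, E ⊆ Finset.range n ∧ 0 ∈ E ∧ E.card ≤ 2 * t + 1 ∧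
      ∀ i j : Fin n, (∀ e ∈ E, (e ≤ i.val ↔ e ≤ j.val)) →
        SearchPaper.posteriorSeq p S y t i = SearchPaper.posteriorSeq p S y t j := by
  induction t with
  | zero =>
    refine ⟨{0}, by simp; omega, by simp, by simp, fun i j _ => rfl⟩
  | succ t ih =>
    obtain ⟨E, hEsub, hE0, hEcard, hconst⟩ := ih (fun s hs => hS s (by omega))
    obtain ⟨a, b, hab⟩ := hS t (by omega)
    refine ⟨(insert a.val (insert (b.val + 1) E)).filter (· < n), ?_, ?_, ?_, ?_⟩
    · intro e he
      simp only [Finset.mem_filter] at he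
      simpa using he.2
    · simp only [Finset.mem_filter, Finset.mem_insert]
      exact ⟨Or.inr (Or.inr hE0), by omega⟩
    · calc ((insert a.val (insert (b.val + 1) E)).filter (· < n)).card
          ≤ (insert a.val (insert (b.val + 1) E)).card := Finset.card_filter_le _ _
        _ ≤ (insert (b.val + 1) E).card + 1 := Finset.card_insert_le _ _
        _ ≤ E.card + 1 + 1 := by
            have := Finset.card_insert_le (b.val + 1) E; omega
        _ ≤ 2 * (t + 1) + 1 := by omega
    · intro i j hij
      show SearchPaper.bayesUpdate p (S t) _ _ _ = SearchPaper.bayesUpdate p (S t) _ _ _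
      refine bayesUpdate_congr p (S t) _ (y t) i j ?_ ?_
      · refine hconst i j (fun e he => ?_)
        refine hij e ?_
        simp only [Finset.mem_filter, Finset.mem_insert]
        exact ⟨Or.inr (Or.inr he), by simpa using hEsub he⟩
      · have ha : (a.val ≤ i.val ↔ a.val ≤ j.val) :=
          hij a.val (Finset.mem_filter.mpr ⟨Finset.mem_insert_self _ _, a.isLt⟩)
        have hb : (b.val + 1 ≤ i.val ↔ b.val + 1 ≤ j.val) := by
          by_cases hbn : b.val + 1 < n
          · exact hij (b.val + 1) (Finset.mem_filter.mpr
              ⟨Finset.mem_insert_of_mem (Finset.mem_insert_self _ _), hbn⟩)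
          · have hi := i.isLt; have hj := j.isLt
            constructor <;> intro h <;> omega
        rw [hab]
        simp only [Finset.mem_Icc, Fin.le_def]
        omega

set_option maxHeartbeats 1000000 in
/-- Lemma 1 in the paper. If the query sets `S 0, ..., S (t-1)` are all
contiguous intervals of `{1, ..., 1/δ}` and the prior is uniform, then the Bayesian
posterior at time `t` is a simple function with at most `2t+1` intervals: there is a
partition of the bins into disjoint contiguous intervals `J 0, ..., J (2t)` on each of
which the posterior is constant, equal to the average posterior mass of the interval. -/
theorem statement0 (n : ℕ) (hn : 2 ≤ n) (p : ℝ → ℝ) (hp : SearchPaper.NoiseOK p)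
    (S : ℕ → Finset (Fin n)) (y : ℕ → Bool) (t : ℕ)
    (hS : ∀ s < t, ∃ a b : Fin n, S s = Finset.Icc a b) :
    ∃ J : Fin (2 * t + 1) → Finset (Fin n),
      (∀ u, ∃ a b : Fin n, J u = Finset.Icc a b) ∧
      (∀ u v, u ≠ v → Disjoint (J u) (J v)) ∧
      (∀ i : Fin n, ∃ u, i ∈ J u) ∧
      (∀ u, ∀ i ∈ J u,
        SearchPaper.posteriorSeq p S y t i =
          (∑ j ∈ J u, SearchPaper.posteriorSeq p S y t j) / ((J u).card : ℝ)) := by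
  obtain ⟨E, hEsub, hE0, hEcard, hconst⟩ := cuts_exist n (by omega) p S y t hS
  set π := SearchPaper.posteriorSeq p S y t with hπdef
  set m := E.card with hm
  have hm0 : 0 < m := Finset.card_pos.mpr ⟨0, hE0⟩
  -- monotone enumeration of E
  let iso := E.orderIsoOfFin hm.symm
  let g : Fin m → ℕ := fun u => (iso u : ℕ)
  have hgE : ∀ u, g u ∈ E := fun u => (iso u).2
  have hgmono : StrictMono g := fun u v h => by
    simpa [g, Subtype.coe_lt_coe] using iso.strictMono h
  have hgsurj : ∀ e ∈ E, ∃ u, g u = e := fun e he =>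
    ⟨iso.symm ⟨e, he⟩, by simp [g]⟩
  have hglt : ∀ u, g u < n := fun u => Finset.mem_range.mp (hEsub (hgE u))
  have hg0 : g ⟨0, hm0⟩ = 0 := by
    obtain ⟨u, hu⟩ := hgsurj 0 hE0
    have := hgmono.monotone (show (⟨0, hm0⟩ : Fin m) ≤ u from Fin.mk_le_of_le_val (by omega))
    omega
  -- lower/upper bounds of the cells
  let lb : Fin (2 * t + 1) → ℕ := fun u => if h : u.val < m then g ⟨u.val, h⟩ else 1
  let ub : Fin (2 * t + 1) → ℕ := fun u =>
    if h : u.val + 1 < m then g ⟨u.val + 1, h⟩ else if u.val < m then n else 0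
  let J : Fin (2 * t + 1) → Finset (Fin n) :=
    fun u => Finset.univ.filter (fun i : Fin n => lb u ≤ i.val ∧ i.val < ub u)
  have hmemJ : ∀ u (i : Fin n), i ∈ J u ↔ (lb u ≤ i.val ∧ i.val < ub u) := by
    intro u i; simp [J]
  have hubn : ∀ u, ub u ≤ n := by
    intro u; simp only [ub]
    split
    · exact le_of_lt (hglt _)
    · split <;> omega
  have hlbub : ∀ u, u.val < m → lb u < ub u := by
    intro u hu; simp only [lb, ub]
    rw [dif_pos hu]
    by_cases h : u.val + 1 < m
    · rw [dif_pos h]; exact hgmono (by simp [Fin.lt_def])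
    · rw [dif_neg h, if_pos hu]; exact hglt _
  -- the key ordering fact: cells are in order
  have horder : ∀ u v : Fin (2 * t + 1), u.val < v.val → v.val < m → ub u ≤ lb v := by
    intro u v huv hv
    simp only [lb, ub]
    rw [dif_pos hv]
    have hu1 : u.val + 1 < m := by omega
    rw [dif_pos hu1]
    exact hgmono.monotone (Fin.mk_le_of_le_val huv)
  have hJempty : ∀ u : Fin (2 * t + 1), ¬ u.val < m → J u = ∅ := by
    intro u hu
    refine Finset.eq_empty_of_forall_notMem (fun i hi => ?_)
    rw [hmemJ] at hi
    simp only [lb, ub] at hi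
    rw [dif_neg hu, dif_neg (by omega), if_neg hu] at hi
    omega
  refine ⟨J, ?_, ?_, ?_, ?_⟩
  · -- each J u is an Icc
    intro u
    by_cases hu : u.val < m
    · have h1 : lb u < ub u := hlbub u hu
      have h2 : ub u ≤ n := hubn u
      refine ⟨⟨lb u, by omega⟩, ⟨ub u - 1, by omega⟩, ?_⟩
      ext i
      rw [hmemJ]
      simp only [Finset.mem_Icc, Fin.le_def]
      omega
    · refine ⟨⟨1, by omega⟩, ⟨0, by omega⟩, ?_⟩
      rw [hJempty u hu]
      symm
      apply Finset.Icc_eq_empty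
      simp [Fin.le_def]
  · -- disjointness
    have key : ∀ u v : Fin (2 * t + 1), u.val < v.val → Disjoint (J u) (J v) := by
      intro u v huv
      by_cases hv : v.val < m
      · rw [Finset.disjoint_left]
        intro i hiu hiv
        rw [hmemJ] at hiu hiv
        have := horder u v huv hv
        omega
      · rw [hJempty v hv]; exact Finset.disjoint_empty_right _
    intro u v huv
    rcases lt_or_gt_of_ne (fun h => huv (Fin.ext h) : u.val ≠ v.val) with h | h
    · exact key u v h
    · exact (key v u h).symm
  · -- covering
    intro i
    have hne : (Finset.univ.filter (fun u : Fin m => g u ≤ i.val)).Nonempty :=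
      ⟨⟨0, hm0⟩, by simp [hg0]⟩
    obtain ⟨u, hu, humax⟩ := Finset.exists_max_image _ (fun u : Fin m => u.val) hne
    simp only [Finset.mem_filter, Finset.mem_univ, true_and] at hu
    have hum : u.val < 2 * t + 1 := by
      have := u.isLt; omega
    refine ⟨⟨u.val, hum⟩, ?_⟩
    rw [hmemJ]
    constructor
    · simp only [lb]
      rw [dif_pos (show u.val < m from u.isLt)]
      simpa using hu
    · simp only [ub]
      by_cases h1 : u.val + 1 < m
      · rw [dif_pos h1]
        by_contra hcon
        push_neg at hcon
        have hmem : (⟨u.val + 1, h1⟩ : Fin m) ∈ Finset.univ.filter (fun u : Fin m => g u ≤ i.val) := by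
          simp only [Finset.mem_filter, Finset.mem_univ, true_and]
          exact hcon
        have := humax ⟨u.val + 1, h1⟩ hmem
        simp at this
      · rw [dif_neg h1, if_pos u.isLt]
        exact i.isLt
  · -- constancy / average
    intro u i hi
    have hu : u.val < m := by
      by_contra h
      rw [hJempty u h] at hi
      simp at hi
    have hconst' : ∀ j ∈ J u, π j = π i := by
      intro j hj
      rw [hmemJ] at hi hj
      refine hconst j i (fun e he => ?_)
      obtain ⟨w, hw⟩ := hgsurj e he
      subst hw
      rcases le_or_gt w.val u.val with hwu | hwu
      · -- g w ≤ lb u ≤ both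
        have h1 : g w ≤ lb u := by
          simp only [lb]
          rw [dif_pos hu]
          exact hgmono.monotone (Fin.le_def.mpr hwu)
        constructor <;> intro _ <;> omega
      · -- both < ub u ≤ g w
        have h1m : u.val + 1 < m := by have := w.isLt; omega
        have h1 : ub u ≤ g w := by
          simp only [ub]
          rw [dif_pos h1m]
          exact hgmono.monotone (Fin.mk_le_of_le_val hwu)
        constructor <;> intro h <;> omega
    have hsum : (∑ j ∈ J u, π j) = ((J u).card : ℝ) * π i := by
      rw [Finset.sum_congr rfl hconst', Finset.sum_const, nsmul_eq_mul]
    have hcard : ((J u).card : ℝ) ≠ 0 := by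
      have : 0 < (J u).card := Finset.card_pos.mpr ⟨i, hi⟩
      exact Nat.cast_ne_zero.mpr this.ne'
    rw [hsum]
    field_simp
end

section
/- Under either the sortPM or the dyaPM strategy with resolution 1/δ and reliability ε, for every time t the Extrinsic Jensen–Shannon divergence satisfies EJS(π(t), γ) ≥ I(1/2, p(δ|S_{t+1}|)), and whenever max_i π_i(t) ≥ π̃ it satisfies EJS(π(t), γ) ≥ π̃·C₁(p(δ)), where π̃ = 1 − 1/(1 + max{log(1/δ), log(1/ε)}). -/
open MeasureTheory Filter

namespace SearchPaper

open Finset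

variable {n : ℕ}

section Aux

lemma log_ge_one_sub_inv {x : ℝ} (hx : 0 < x) : 1 - 1/x ≤ Real.log x := by
  have h := Real.log_le_sub_one_of_pos (show 0 < 1/x by positivity)
  rw [Real.log_div one_ne_zero (ne_of_gt hx), Real.log_one] at h
  linarith

lemma log_div_ge {a b : ℝ} (ha : 0 < a) (hb : 0 < b) : 1 - b/a ≤ Real.log (a/b) := by
  have h := Real.log_le_sub_one_of_pos (div_pos hb ha)
  rw [Real.log_div hb.ne' ha.ne'] at h
  rw [Real.log_div ha.ne' hb.ne']
  linarith

lemma klBern_nonneg {a b : ℝ} (ha0 : 0 < a) (ha1 : a < 1) (hb0 : 0 < b) (hb1 : b < 1) :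
    0 ≤ klBern a b := by
  have h1 := log_div_ge ha0 hb0
  have h2 := log_div_ge (show 0 < 1-a by linarith) (show 0 < 1-b by linarith)
  have h1' := mul_le_mul_of_nonneg_left h1 ha0.le
  have h2' := mul_le_mul_of_nonneg_left h2 (by linarith : (0:ℝ) ≤ 1 - a)
  have ha' : a ≠ 0 := ha0.ne'
  have ha1' : (1:ℝ) - a ≠ 0 := (show (0:ℝ) < 1 - a by linarith).ne'
  have e1 : a * (1 - b/a) = a - b := by field_simp
  have e2 : (1-a) * (1 - (1-b)/(1-a)) = b - a := by field_simp; ring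
  rw [e1] at h1'; rw [e2] at h2'
  unfold klBern
  linarith

lemma klBern_tangent {a s : ℝ} (ha0 : 0 < a) (ha1 : a < 1) (hs0 : 0 < s) (hs1 : s < 1) :
    klBern a (1/2) + (1 - 2*s) * (2*a - 1) ≤ klBern a s := by
  have hs' : s ≠ 0 := hs0.ne'
  have hs1' : (1:ℝ) - s ≠ 0 := (show (0:ℝ) < 1 - s by linarith).ne'
  have h1 : 1 - 2*s ≤ Real.log (1/(2*s)) := by
    have := log_div_ge one_pos (show (0:ℝ) < 2*s by linarith)
    rw [div_one] at this; linarith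
  have h2 : 2*s - 1 ≤ Real.log (1/(2*(1-s))) := by
    have := log_div_ge one_pos (show (0:ℝ) < 2*(1-s) by linarith)
    rw [div_one] at this; linarith
  have ha1' : (0:ℝ) < 1 - a := by linarith
  have e1 : Real.log (a/s) = Real.log (a/(1/2)) + Real.log (1/(2*s)) := by
    rw [← Real.log_mul (div_pos ha0 (by norm_num)).ne' (by positivity)]
    congr 1; field_simp
  have e2 : Real.log ((1-a)/(1-s)) = Real.log ((1-a)/(1-1/2)) + Real.log (1/(2*(1-s))) := by
    rw [← Real.log_mul (div_pos ha1' (by norm_num)).ne' (by positivity)]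
    congr 1
    rw [div_mul_div_comm]
    rw [show (1:ℝ) - 1/2 = 1/2 by norm_num]
    rw [div_eq_div_iff (by linarith) (by positivity)]
    ring
  have h1' := mul_le_mul_of_nonneg_left h1 ha0.le
  have h2' := mul_le_mul_of_nonneg_left h2 (by linarith : (0:ℝ) ≤ 1 - a)
  unfold klBern
  rw [e1, e2]
  nlinarith [h1', h2']

lemma klBern_one_sub_half (x : ℝ) : klBern (1-x) (1/2) = klBern x (1/2) := by
  unfold klBern
  rw [show (1:ℝ) - (1-x) = x by ring, show (1:ℝ) - 1/2 = 1/2 by norm_num]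
  try ring

lemma mutInfo_half (x : ℝ) : mutInfo (1/2) x = klBern x (1/2) := by
  unfold mutInfo
  rw [show (1:ℝ)/2 * (1-x) + (1 - 1/2) * x = 1/2 by ring, klBern_one_sub_half]
  ring

lemma klBern_one_sub_self (x : ℝ) : klBern (1-x) x = C1 x := by
  unfold C1 klBern
  rw [show (1:ℝ) - (1-x) = x by ring]
  ring

lemma pi_lt_one (hn : 2 ≤ n) {π : Fin n → ℝ} (hpos : ∀ i, 0 < π i)
    (hsum : ∑ i, π i = 1) (i : Fin n) : π i < 1 := by
  obtain ⟨j, hj⟩ := Fintype.exists_ne_of_one_lt_card (by simp; omega) i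
  have hsub : ({j, i} : Finset (Fin n)) ⊆ univ := subset_univ _
  have h := Finset.sum_le_sum_of_subset_of_nonneg hsub (fun k _ _ => (hpos k).le)
  rw [Finset.sum_pair hj, hsum] at h
  linarith [hpos j]

lemma lik_pos {cp : ℝ} (h0 : 0 < cp) (h1 : cp < 1) (x y : Bool) : 0 < lik cp x y := by
  unfold lik; split <;> linarith

lemma lik_lt_one {cp : ℝ} (h0 : 0 < cp) (h1 : cp < 1) (x y : Bool) : lik cp x y < 1 := by
  unfold lik; split <;> linarith

lemma lik_false_eq {cp : ℝ} (x : Bool) : lik cp x false = 1 - lik cp x true := by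
  cases x <;> simp [lik] <;> try ring

lemma klFin_bool (P Q : Bool → ℝ) :
    klFin P Q = P true * Real.log (P true / Q true) + P false * Real.log (P false / Q false) := by
  unfold klFin
  rw [Fintype.sum_bool]

/-- Identification of one EJS summand as a Bernoulli relative entropy. -/
lemma klFin_term (hn : 2 ≤ n) {cp : ℝ} (hcp0 : 0 < cp) (hcp1 : cp < 1)
    (S : Finset (Fin n)) (π : Fin n → ℝ) (hpos : ∀ i, 0 < π i) (hsum : ∑ i, π i = 1)
    (i : Fin n) :
    ∃ s : ℝ, 0 < s ∧ s < 1 ∧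
      s * (1 - π i) = ∑ j ∈ univ.erase i, π j * lik cp (decide (j ∈ S)) true ∧
      klFin (fun y => lik cp (decide (i ∈ S)) y)
        (fun y => ∑ j ∈ univ.erase i, π j / (1 - π i) * lik cp (decide (j ∈ S)) y)
        = klBern (lik cp (decide (i ∈ S)) true) s := by
  have h1pi : 0 < 1 - π i := by linarith [pi_lt_one hn hpos hsum i]
  obtain ⟨j, hj⟩ := Fintype.exists_ne_of_one_lt_card (by simp; omega) i
  have hjmem : j ∈ univ.erase i := Finset.mem_erase.2 ⟨hj, mem_univ j⟩
  have hne : (univ.erase i).Nonempty := ⟨j, hjmem⟩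
  set Et := ∑ j ∈ univ.erase i, π j * lik cp (decide (j ∈ S)) true with hEt
  have hErase : ∑ j ∈ univ.erase i, π j = 1 - π i := by
    rw [Finset.sum_erase_eq_sub (mem_univ i), hsum]
  have hEt0 : 0 < Et :=
    Finset.sum_pos (fun k _ => mul_pos (hpos k) (lik_pos hcp0 hcp1 _ _)) hne
  have hEt1 : Et < 1 - π i := by
    rw [← hErase]
    apply Finset.sum_lt_sum_of_nonempty hne
    intro k _
    nlinarith [lik_lt_one hcp0 hcp1 (decide (k ∈ S)) true, hpos k,
      lik_pos hcp0 hcp1 (decide (k ∈ S)) true]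
  refine ⟨Et / (1 - π i), div_pos hEt0 h1pi, (div_lt_one h1pi).2 hEt1, by field_simp, ?_⟩
  have hQt : (∑ j ∈ univ.erase i, π j / (1 - π i) * lik cp (decide (j ∈ S)) true)
      = Et / (1 - π i) := by
    rw [hEt, Finset.sum_div]
    exact Finset.sum_congr rfl (fun k _ => by ring)
  have hQf : (∑ j ∈ univ.erase i, π j / (1 - π i) * lik cp (decide (j ∈ S)) false)
      = 1 - Et / (1 - π i) := by
    have e : ∀ k : Fin n, π k / (1 - π i) * lik cp (decide (k ∈ S)) false
        = π k / (1 - π i) - π k / (1 - π i) * lik cp (decide (k ∈ S)) true := by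
      intro k; rw [lik_false_eq]; ring
    rw [Finset.sum_congr rfl (fun k _ => e k), Finset.sum_sub_distrib, ← Finset.sum_div,
      hErase, div_self h1pi.ne', ← hQt]
  rw [klFin_bool, hQt, hQf, lik_false_eq]
  rfl

end Aux

end SearchPaper


namespace SearchPaper
open Finset
variable {n : ℕ}
section Core

lemma lik_mem {cp : ℝ} {S : Finset (Fin n)} {j : Fin n} (hj : j ∈ S) :
    lik cp (decide (j ∈ S)) true = 1 - cp := by simp [lik, hj]

lemma lik_not_mem {cp : ℝ} {S : Finset (Fin n)} {j : Fin n} (hj : j ∉ S) :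
    lik cp (decide (j ∈ S)) true = cp := by simp [lik, hj]

set_option maxHeartbeats 1000000 in
lemma core_EJS (hn : 2 ≤ n) (p : ℝ → ℝ) (S : Finset (Fin n)) (π : Fin n → ℝ)
    (hpos : ∀ i, 0 < π i) (hsum : ∑ i, π i = 1)
    (hcp0 : 0 < crossover p n S) (hcp1 : crossover p n S < 1/2)
    (hpiv1 : 1/2 ≤ mass π S → ∃ i ∈ S, 2 * mass π S - 1 ≤ π i)
    (hpiv2 : mass π S ≤ 1/2 → ∃ j, j ∉ S ∧ 1 - 2 * mass π S ≤ π j) :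
    mutInfo (1/2) (crossover p n S) ≤ EJS p S π := by
  set cp := crossover p n S with hcpdef
  have hcp1' : cp < 1 := by linarith
  set q := mass π S with hqdef
  have hlt1 : ∀ i, π i < 1 := pi_lt_one hn hpos hsum
  have h1pi : ∀ i : Fin n, 0 < 1 - π i := fun i => by linarith [hlt1 i]
  have hq0 : 0 ≤ q := Finset.sum_nonneg (fun i _ => (hpos i).le)
  have hqS : ∑ i ∈ S, π i = q := rfl
  have hcompl : ∑ j ∈ Sᶜ, π j = 1 - q := by
    have h := Finset.sum_add_sum_compl S π
    rw [hsum, hqS] at h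
    linarith
  have hr : ∑ j, π j * lik cp (decide (j ∈ S)) true = cp + q * (1 - 2*cp) := by
    rw [← Finset.sum_add_sum_compl S (fun j => π j * lik cp (decide (j ∈ S)) true)]
    have e1 : ∑ j ∈ S, π j * lik cp (decide (j ∈ S)) true = (1-cp) * ∑ j ∈ S, π j := by
      rw [Finset.mul_sum]
      refine Finset.sum_congr rfl (fun j hj => ?_)
      rw [lik_mem hj]; ring
    have e2 : ∑ j ∈ Sᶜ, π j * lik cp (decide (j ∈ S)) true = cp * ∑ j ∈ Sᶜ, π j := by
      rw [Finset.mul_sum]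
      refine Finset.sum_congr rfl (fun j hj => ?_)
      rw [lik_not_mem (Finset.mem_compl.1 hj)]; ring
    rw [e1, e2, hcompl, hqS]; ring
  set w : Fin n → ℝ := fun i =>
    if i ∈ S then π i * (1 - 2*q + π i) / (1 - π i)
    else π i * (π i - (1 - 2*q)) / (1 - π i) with hwdef
  have key : ∀ i : Fin n,
      π i * mutInfo (1/2) cp + (1-2*cp)^2 * w i ≤
        π i * klFin (fun y => lik cp (decide (i ∈ S)) y)
          (fun y => ∑ j ∈ univ.erase i, π j / (1 - π i) * lik cp (decide (j ∈ S)) y) := by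
    intro i
    obtain ⟨s, hs0, hs1, hsval, hklf⟩ := klFin_term hn hcp0 hcp1' S π hpos hsum i
    rw [hklf]
    have hEt : s * (1 - π i) = (cp + q*(1-2*cp)) - π i * lik cp (decide (i ∈ S)) true := by
      rw [hsval, Finset.sum_erase_eq_sub (Finset.mem_univ i), hr]
    by_cases hiS : i ∈ S
    · rw [lik_mem hiS] at hEt ⊢
      have htan := klBern_tangent (show (0:ℝ) < 1-cp by linarith)
        (show (1:ℝ)-cp < 1 by linarith) hs0 hs1
      rw [klBern_one_sub_half, ← mutInfo_half] at htan
      have hsv : s = (cp + q*(1-2*cp) - π i * (1-cp)) / (1 - π i) :=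
        (eq_div_iff (h1pi i).ne').2 hEt
      have hwv : w i = π i * (1 - 2*q + π i) / (1 - π i) := by
        rw [hwdef]; simp only [if_pos hiS]
      have hkey2 : (1-2*cp)^2 * w i = π i * ((1 - 2*s) * (2*(1-cp) - 1)) := by
        rw [hwv, hsv]
        have h1 : (1 - π i) ≠ 0 := (h1pi i).ne'
        field_simp
        ring
      rw [hkey2]
      nlinarith [mul_le_mul_of_nonneg_left htan (hpos i).le]
    · rw [lik_not_mem hiS] at hEt ⊢
      have htan := klBern_tangent hcp0 hcp1' hs0 hs1
      rw [← mutInfo_half] at htan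
      have hsv : s = (cp + q*(1-2*cp) - π i * cp) / (1 - π i) :=
        (eq_div_iff (h1pi i).ne').2 hEt
      have hwv : w i = π i * (π i - (1 - 2*q)) / (1 - π i) := by
        rw [hwdef]; simp only [if_neg hiS]
      have hkey2 : (1-2*cp)^2 * w i = π i * ((1 - 2*s) * (2*cp - 1)) := by
        rw [hwv, hsv]
        have h1 : (1 - π i) ≠ 0 := (h1pi i).ne'
        field_simp
        ring
      rw [hkey2]
      nlinarith [mul_le_mul_of_nonneg_left htan (hpos i).le]
  have hVnn : ∀ (T : Finset (Fin n)), 0 ≤ ∑ i ∈ T, π i^2/(1-π i) :=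
    fun T => Finset.sum_nonneg (fun i _ => div_nonneg (sq_nonneg _) (h1pi i).le)
  have hWsplit : ∑ i, w i
      = (1+(1-2*q)) * (∑ i ∈ S, π i^2/(1-π i))
        + (1-(1-2*q)) * (∑ i ∈ Sᶜ, π i^2/(1-π i)) - (1-2*q)^2 := by
    rw [← Finset.sum_add_sum_compl S w]
    have e1 : ∑ i ∈ S, w i
        = (1+(1-2*q)) * (∑ i ∈ S, π i^2/(1-π i)) + (1-2*q) * (∑ i ∈ S, π i) := by
      rw [Finset.mul_sum, Finset.mul_sum, ← Finset.sum_add_distrib]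
      refine Finset.sum_congr rfl (fun i hi => ?_)
      rw [hwdef]; simp only [if_pos hi]
      have h1 : (1 - π i) ≠ 0 := (h1pi i).ne'
      field_simp
      ring
    have e2 : ∑ i ∈ Sᶜ, w i
        = (1-(1-2*q)) * (∑ i ∈ Sᶜ, π i^2/(1-π i)) - (1-2*q) * (∑ i ∈ Sᶜ, π i) := by
      rw [Finset.mul_sum, Finset.mul_sum, ← Finset.sum_sub_distrib]
      refine Finset.sum_congr rfl (fun i hi => ?_)
      rw [hwdef]; simp only [if_neg (Finset.mem_compl.1 hi)]
      have h1 : (1 - π i) ≠ 0 := (h1pi i).ne'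
      field_simp
      ring
    rw [e1, e2, hqS, hcompl]
    ring
  have hsumW : 0 ≤ ∑ i, w i := by
    rw [hWsplit]
    rcases le_total (1/2 : ℝ) q with hq2 | hq2
    · obtain ⟨i0, hi0S, hi0⟩ := hpiv1 hq2
      have hq1 : q < 1 := by nlinarith [hlt1 i0]
      have hf : (2*q-1)^2/(2-2*q) ≤ π i0^2/(1-π i0) := by
        rw [div_le_div_iff₀ (by linarith) (h1pi i0)]
        nlinarith [mul_nonneg (sub_nonneg.2 hi0)
          (show 0 ≤ π i0 + (2*q-1) - (2*q-1)*π i0 by nlinarith [hpos i0, hlt1 i0])]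
      have hsingle : π i0^2/(1-π i0) ≤ ∑ i ∈ S, π i^2/(1-π i) :=
        Finset.single_le_sum (f := fun i => π i^2/(1-π i))
          (fun i _ => div_nonneg (sq_nonneg _) (h1pi i).le) hi0S
      have hne20 : (2:ℝ)-2*q ≠ 0 := by linarith
      have hchain : (2*q-1)^2 ≤ (1+(1-2*q)) * (∑ i ∈ S, π i^2/(1-π i)) := by
        have h2 := le_trans hf hsingle
        calc (2*q-1)^2 = (2-2*q) * ((2*q-1)^2/(2-2*q)) := by field_simp [show (1:ℝ) - q ≠ 0 from fun h => hne20 (by linarith)]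
          _ ≤ (2-2*q) * (∑ i ∈ S, π i^2/(1-π i)) :=
              mul_le_mul_of_nonneg_left h2 (by linarith)
          _ = (1+(1-2*q)) * (∑ i ∈ S, π i^2/(1-π i)) := by ring
      have h3 : 0 ≤ (1-(1-2*q)) * (∑ i ∈ Sᶜ, π i^2/(1-π i)) :=
        mul_nonneg (by linarith) (hVnn Sᶜ)
      nlinarith [hchain, h3]
    · obtain ⟨j0, hj0S, hj0⟩ := hpiv2 hq2
      have hu1 : (1 - 2*q) < 1 := by nlinarith [hlt1 j0]
      have hq02 : 0 < 2*q := by nlinarith [hpos j0, hlt1 j0, hj0]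
      have hf : (1-2*q)^2/(2*q) ≤ π j0^2/(1-π j0) := by
        rw [div_le_div_iff₀ (by linarith) (h1pi j0)]
        nlinarith [mul_nonneg (sub_nonneg.2 hj0)
          (show 0 ≤ π j0 + (1-2*q) - (1-2*q)*π j0 by nlinarith [hpos j0, hlt1 j0])]
      have hsingle : π j0^2/(1-π j0) ≤ ∑ i ∈ Sᶜ, π i^2/(1-π i) :=
        Finset.single_le_sum (f := fun i => π i^2/(1-π i))
          (fun i _ => div_nonneg (sq_nonneg _) (h1pi i).le)
          (Finset.mem_compl.2 hj0S)
      have hne2q : (2:ℝ)*q ≠ 0 := hq02.ne'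
      have hchain : (1-2*q)^2 ≤ (1-(1-2*q)) * (∑ i ∈ Sᶜ, π i^2/(1-π i)) := by
        have h2 := le_trans hf hsingle
        calc (1-2*q)^2 = (2*q) * ((1-2*q)^2/(2*q)) := by field_simp [(by linarith : (0:ℝ) < q).ne']
          _ ≤ (2*q) * (∑ i ∈ Sᶜ, π i^2/(1-π i)) :=
              mul_le_mul_of_nonneg_left h2 (by linarith)
          _ = (1-(1-2*q)) * (∑ i ∈ Sᶜ, π i^2/(1-π i)) := by ring
      have h3 : 0 ≤ (1+(1-2*q)) * (∑ i ∈ S, π i^2/(1-π i)) :=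
        mul_nonneg (by linarith) (hVnn S)
      nlinarith [hchain, h3]
  have hEJS : EJS p S π = ∑ i, π i * klFin (fun y => lik cp (decide (i ∈ S)) y)
      (fun y => ∑ j ∈ univ.erase i, π j / (1 - π i) * lik cp (decide (j ∈ S)) y) := rfl
  have h2 : ∑ i, (π i * mutInfo (1/2) cp + (1-2*cp)^2 * w i) ≤ EJS p S π := by
    rw [hEJS]
    exact Finset.sum_le_sum (fun i _ => key i)
  have h3 : ∑ i, (π i * mutInfo (1/2) cp + (1-2*cp)^2 * w i)
      = mutInfo (1/2) cp + (1-2*cp)^2 * ∑ i, w i := by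
    rw [Finset.sum_add_distrib, ← Finset.sum_mul, hsum, ← Finset.mul_sum]
    ring
  rw [h3] at h2
  nlinarith [mul_nonneg (sq_nonneg (1-2*cp)) hsumW]

end Core
end SearchPaper


namespace SearchPaper
open Finset
variable {n : ℕ}
noncomputable section Strat

/-- Cumulative sums of a sorted posterior. -/
def cumSort (π : Fin n → ℝ) (σ : Equiv.Perm (Fin n)) (m : ℕ) : ℝ :=
  ∑ j ∈ Finset.univ.filter (fun j : Fin n => (j : ℕ) < m), π (σ j)

lemma cumSort_mono (π : Fin n → ℝ) (hpos : ∀ i, 0 < π i) (σ : Equiv.Perm (Fin n))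
    {m1 m2 : ℕ} (h : m1 ≤ m2) : cumSort π σ m1 ≤ cumSort π σ m2 := by
  apply Finset.sum_le_sum_of_subset_of_nonneg
  · intro j hj
    simp only [Finset.mem_filter, Finset.mem_univ, true_and] at hj ⊢
    omega
  · exact fun j _ _ => (hpos _).le

lemma cumSort_step (π : Fin n → ℝ) (σ : Equiv.Perm (Fin n)) {m : ℕ} (hm : m < n) :
    cumSort π σ (m+1) = cumSort π σ m + π (σ ⟨m, hm⟩) := by
  unfold cumSort
  have hins : (Finset.univ.filter (fun j : Fin n => (j:ℕ) < m+1))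
      = insert (⟨m, hm⟩ : Fin n) (Finset.univ.filter (fun j : Fin n => (j:ℕ) < m)) := by
    ext j
    simp only [Finset.mem_filter, Finset.mem_univ, true_and, Finset.mem_insert, Fin.ext_iff]
    omega
  rw [hins, Finset.sum_insert (by simp)]
  ring

lemma cumSort_zero (π : Fin n → ℝ) (σ : Equiv.Perm (Fin n)) : cumSort π σ 0 = 0 := by
  unfold cumSort
  have : (Finset.univ.filter (fun j : Fin n => (j:ℕ) < 0)) = ∅ := by
    ext j; simp
  rw [this, Finset.sum_empty]

lemma cumSort_full (π : Fin n → ℝ) (σ : Equiv.Perm (Fin n)) (hsum : ∑ i, π i = 1) :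
    cumSort π σ n = 1 := by
  unfold cumSort
  have : (Finset.univ.filter (fun j : Fin n => (j:ℕ) < n)) = Finset.univ := by
    ext j; simp [j.isLt]
  rw [this, Equiv.sum_comp σ π, hsum]

lemma mass_le_one (π : Fin n → ℝ) (hpos : ∀ i, 0 < π i) (hsum : ∑ i, π i = 1)
    (S : Finset (Fin n)) : mass π S ≤ 1 := by
  rw [← hsum]
  exact Finset.sum_le_sum_of_subset_of_nonneg (Finset.subset_univ S)
    (fun i _ _ => (hpos i).le)

lemma interval_mono (π : Fin n → ℝ) (hpos : ∀ i, 0 < π i) (a : ℕ) {b1 b2 : ℕ} (h : b1 ≤ b2) :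
    mass π (intervalFromTo n a b1) ≤ mass π (intervalFromTo n a b2) := by
  apply Finset.sum_le_sum_of_subset_of_nonneg
  · intro i hi
    simp only [intervalFromTo, Finset.mem_filter, Finset.mem_univ, true_and] at hi ⊢
    omega
  · exact fun i _ _ => (hpos i).le

lemma interval_step (π : Fin n → ℝ) (a : ℕ) {b : ℕ} (hab : a ≤ b) (hb : b < n) :
    mass π (intervalFromTo n a (b+1)) = mass π (intervalFromTo n a b) + π ⟨b, hb⟩ := by
  unfold mass
  have hins : intervalFromTo n a (b+1) = insert (⟨b, hb⟩ : Fin n) (intervalFromTo n a b) := by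
    ext i
    simp only [intervalFromTo, Finset.mem_filter, Finset.mem_univ, true_and,
      Finset.mem_insert, Fin.ext_iff]
    omega
  have hnotm : (⟨b, hb⟩ : Fin n) ∉ intervalFromTo n a b := by
    simp only [intervalFromTo, Finset.mem_filter, Finset.mem_univ, true_and]
    omega
  rw [hins, Finset.sum_insert hnotm]
  ring

lemma interval_empty (π : Fin n → ℝ) (a : ℕ) : mass π (intervalFromTo n a a) = 0 := by
  unfold mass
  have : intervalFromTo n a a = ∅ := by
    ext i
    simp only [intervalFromTo, Finset.mem_filter, Finset.mem_univ, true_and,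
      Finset.notMem_empty, iff_false]
    omega
  rw [this, Finset.sum_empty]

/-- The structural facts about a strategy that drive the EJS bounds. -/
def StratOK (γ : (Fin n → ℝ) → Finset (Fin n)) : Prop :=
  ∀ π : Fin n → ℝ, (∀ i, 0 < π i) → (∑ i, π i = 1) →
    (1 ≤ (γ π).card ∧ (γ π).card ≤ n - 1) ∧
    (1/2 ≤ mass π (γ π) → ∃ i ∈ γ π, 2 * mass π (γ π) - 1 ≤ π i) ∧
    (mass π (γ π) ≤ 1/2 → ∃ j, j ∉ γ π ∧ 1 - 2 * mass π (γ π) ≤ π j) ∧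
    ((∃ i, 1/2 ≤ π i) → ∃ s, γ π = {s} ∧ ∀ i, π i ≤ π s)

lemma sortPM_ok (hn : 2 ≤ n) {γ : (Fin n → ℝ) → Finset (Fin n)} (hγ : IsSortPM γ) :
    StratOK γ := by
  intro π hpos hsum
  have hlt1 := pi_lt_one hn hpos hsum
  obtain ⟨σ, hanti, k, hk, hmin, hS⟩ := hγ π
  rw [Finset.mem_Icc] at hk
  have hmin' : ∀ k' ∈ Finset.Icc 1 n, |cumSort π σ k - 1/2| ≤ |cumSort π σ k' - 1/2| := hmin
  have hn0 : 0 < n := by omega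
  have hc1 : cumSort π σ 1 = π (σ ⟨0, hn0⟩) := by
    rw [show (1:ℕ) = 0 + 1 from rfl, cumSort_step π σ hn0, cumSort_zero]
    ring
  have hcn : cumSort π σ n = 1 := cumSort_full π σ hsum
  have hσ0max : ∀ i, π i ≤ π (σ ⟨0, hn0⟩) := by
    intro i
    have h := hanti (show (⟨0, hn0⟩ : Fin n) ≤ σ.symm i from by simp [Fin.le_def])
    simpa using h
  have hklt : k < n := by
    rcases Nat.lt_or_ge k n with h | h
    · exact h
    · exfalso
      have hkn : k = n := le_antisymm hk.2 h
      have h1 := hmin' 1 (by rw [Finset.mem_Icc]; omega)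
      rw [hkn, hcn, hc1] at h1
      have hb1 : |π (σ ⟨0, hn0⟩) - 1/2| < 1/2 := by
        rw [abs_lt]
        constructor
        · linarith [hpos (σ ⟨0, hn0⟩)]
        · linarith [hlt1 (σ ⟨0, hn0⟩)]
      rw [show |(1:ℝ) - 1/2| = 1/2 from by norm_num] at h1
      linarith
  have hmemS : ∀ (m : ℕ) (hm : m < n), (σ ⟨m, hm⟩ ∈ γ π ↔ m < k) := by
    intro m hm
    rw [hS]
    simp
  have hmass : mass π (γ π) = cumSort π σ k := by
    rw [hS]
    unfold mass cumSort
    refine (Finset.sum_equiv σ (fun j => ?_) (fun j _ => rfl)).symm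
    simp
  have hcard1 : 1 ≤ (γ π).card :=
    Finset.card_pos.2 ⟨σ ⟨0, hn0⟩, (hmemS 0 hn0).2 (by omega)⟩
  have hnotmem : σ ⟨k, hklt⟩ ∉ γ π := by
    intro h
    exact absurd ((hmemS k hklt).1 h) (lt_irrefl k)
  have hcard2 : (γ π).card ≤ n - 1 := by
    have hne : γ π ≠ Finset.univ := by
      intro h
      exact hnotmem (h ▸ Finset.mem_univ _)
    have h1 : (γ π).card < n := by
      have := Finset.card_lt_card (Finset.ssubset_univ_iff.2 hne)
      simpa using this
    omega
  refine ⟨⟨hcard1, hcard2⟩, ?_, ?_, ?_⟩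
  · -- pivot 1
    intro hhalf
    rw [hmass] at hhalf ⊢
    rcases Nat.lt_or_ge k 2 with hk1 | hk2
    · have hk1' : k = 1 := by omega
      refine ⟨σ ⟨0, hn0⟩, (hmemS 0 hn0).2 (by omega), ?_⟩
      rw [hk1', hc1]
      linarith [hlt1 (σ ⟨0, hn0⟩)]
    · have hkm1 : k - 1 < n := by omega
      refine ⟨σ ⟨k-1, hkm1⟩, (hmemS _ hkm1).2 (by omega), ?_⟩
      have hstep := cumSort_step π σ hkm1
      rw [show k - 1 + 1 = k by omega] at hstep
      have habs := hmin' (k-1) (by rw [Finset.mem_Icc]; omega)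
      have h1 : cumSort π σ k - 1/2 ≤ |cumSort π σ (k-1) - 1/2| :=
        le_trans (le_abs_self _) habs
      rcases abs_cases (cumSort π σ (k-1) - 1/2) with ⟨heq, _⟩ | ⟨heq, _⟩ <;> rw [heq] at h1
      · linarith [hpos (σ ⟨k-1, hkm1⟩)]
      · linarith
  · -- pivot 2
    intro hhalf
    rw [hmass] at hhalf ⊢
    refine ⟨σ ⟨k, hklt⟩, hnotmem, ?_⟩
    have hstep := cumSort_step π σ hklt
    have habs := hmin' (k+1) (by rw [Finset.mem_Icc]; omega)
    have h1 : 1/2 - cumSort π σ k ≤ |cumSort π σ (k+1) - 1/2| := by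
      refine le_trans ?_ habs
      rw [abs_sub_comm]
      exact le_abs_self _
    rcases abs_cases (cumSort π σ (k+1) - 1/2) with ⟨heq, _⟩ | ⟨heq, _⟩ <;> rw [heq] at h1
    · linarith
    · linarith [hpos (σ ⟨k, hklt⟩)]
  · -- singleton
    rintro ⟨i0, hi0⟩
    refine ⟨σ ⟨0, hn0⟩, ?_, hσ0max⟩
    have hs2 : 1/2 ≤ π (σ ⟨0, hn0⟩) := le_trans hi0 (hσ0max i0)
    have hk1 : k = 1 := by
      by_contra hne1
      have hk2 : 2 ≤ k := by omega
      have h2n : 1 < n := by omega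
      have hstep1 := cumSort_step π σ h2n
      have hmono := cumSort_mono π hpos σ hk2
      have habs := hmin' 1 (by rw [Finset.mem_Icc]; omega)
      have habs1 : |cumSort π σ 1 - 1/2| = cumSort π σ 1 - 1/2 :=
        abs_of_nonneg (by rw [hc1]; linarith)
      have h1 : cumSort π σ k - 1/2 ≤ cumSort π σ 1 - 1/2 := by
        rw [← habs1]
        exact le_trans (le_abs_self _) habs
      have h2 : cumSort π σ (1+1) ≤ cumSort π σ k := by
        have : (1:ℕ)+1 ≤ k := hk2
        exact cumSort_mono π hpos σ this
      linarith [hpos (σ ⟨1, h2n⟩)]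
    rw [hS, hk1]
    ext i
    simp only [Finset.mem_filter, Finset.mem_univ, true_and, Finset.mem_singleton,
      Nat.lt_one_iff]
    constructor
    · intro h
      have h2 : σ.symm i = ⟨0, hn0⟩ := Fin.ext h
      rw [← h2, Equiv.apply_symm_apply]
    · intro h
      rw [h]
      simp

lemma dyaPM_ok (hn : 2 ≤ n) {L : ℕ} (hL : n = 2^L) {γ : (Fin n → ℝ) → Finset (Fin n)}
    (hγ : IsDyaPM L γ) : StratOK γ := by
  intro π hpos hsum
  have hlt1 := pi_lt_one hn hpos hsum
  obtain ⟨l, hlL, m, hm, hhalf, hdeep, hargm, k, hk, hmin, hS⟩ := hγ π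
  rw [Finset.mem_Icc] at hk
  set a := m * 2^(L - l) with ha
  have hmin' : ∀ k' ∈ Finset.Icc (a+1) n,
      |mass π (intervalFromTo n a k) - 1/2| ≤ |mass π (intervalFromTo n a k') - 1/2| := hmin
  have hpow : 0 < 2^(L-l) := by positivity
  have han : a + 2^(L-l) ≤ n := by
    rw [hL, ha]
    calc m * 2^(L-l) + 2^(L-l) = (m+1) * 2^(L-l) := by ring
      _ ≤ 2^l * 2^(L-l) := Nat.mul_le_mul_right _ hm
      _ = 2^L := by rw [← pow_add]; congr 1; omega
  have halt : a < n := by omega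
  have hQ : mass π (γ π) = mass π (intervalFromTo n a k) := by rw [hS]
  have hhset : hset n L l m = intervalFromTo n a (a + 2^(L-l)) := by
    unfold hset
    rw [ha]
    congr 1
    ring
  have hhalf' : 1/2 ≤ mass π (intervalFromTo n a (a + 2^(L-l))) := by
    rw [← hhset]; exact hhalf
  have hknle : k = n → 1/2 ≤ mass π (intervalFromTo n a k) := by
    intro hkn
    rw [hkn]
    exact le_trans hhalf' (interval_mono π hpos a han)
  have hmemIT : ∀ (b j : ℕ) (hj : j < n),
      ((⟨j, hj⟩ : Fin n) ∈ intervalFromTo n a b ↔ (a ≤ j ∧ j < b)) := by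
    intro b j hj
    simp [intervalFromTo]
  have hmema : (⟨a, halt⟩ : Fin n) ∈ intervalFromTo n a k := by
    rw [hmemIT k a halt]
    omega
  have hcard1 : 1 ≤ (γ π).card := by
    rw [hS]
    exact Finset.card_pos.2 ⟨_, hmema⟩
  have hea : mass π (intervalFromTo n a (a+1)) = π ⟨a, halt⟩ := by
    rw [interval_step π a (le_refl a) halt, interval_empty]
    ring
  have hnotuniv : ∃ j : Fin n, j ∉ intervalFromTo n a k := by
    rcases Nat.eq_zero_or_pos a with ha0 | hapos
    · have hklt : k < n := by
        by_contra h
        have hkn : k = n := by omega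
        have h1 := hmin' (a+1) (by rw [Finset.mem_Icc]; omega)
        have hfull : mass π (intervalFromTo n a n) = 1 := by
          rw [← hsum]
          unfold mass
          refine Finset.sum_congr ?_ (fun _ _ => rfl)
          ext i
          simp only [intervalFromTo, Finset.mem_filter, Finset.mem_univ, true_and, iff_true]
          exact ⟨by omega, i.isLt⟩
        rw [hkn, hfull, hea] at h1
        have hb1 : |π (⟨a, halt⟩ : Fin n) - 1/2| < 1/2 := by
          rw [abs_lt]
          constructor
          · linarith [hpos (⟨a, halt⟩ : Fin n)]
          · linarith [hlt1 (⟨a, halt⟩ : Fin n)]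
        rw [show |(1:ℝ) - 1/2| = 1/2 from by norm_num] at h1
        linarith
      refine ⟨⟨n-1, by omega⟩, ?_⟩
      rw [hmemIT k (n-1) (by omega)]
      omega
    · refine ⟨⟨0, by omega⟩, ?_⟩
      rw [hmemIT k 0 (by omega)]
      omega
  have hcard2 : (γ π).card ≤ n - 1 := by
    obtain ⟨j, hj⟩ := hnotuniv
    have hne : γ π ≠ Finset.univ := by
      rw [hS]
      intro h
      exact hj (h ▸ Finset.mem_univ j)
    have h1 : (γ π).card < n := by
      have := Finset.card_lt_card (Finset.ssubset_univ_iff.2 hne)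
      simpa using this
    omega
  refine ⟨⟨hcard1, hcard2⟩, ?_, ?_, ?_⟩
  · -- pivot 1
    intro hhalfQ
    rw [hQ] at hhalfQ ⊢
    rcases Nat.lt_or_ge k (a+2) with hk1 | hk2
    · have hk1' : k = a+1 := by omega
      refine ⟨⟨a, halt⟩, by rw [hS]; exact hmema, ?_⟩
      rw [hk1', hea]
      linarith [hlt1 (⟨a, halt⟩ : Fin n)]
    · have hkm1 : k - 1 < n := by omega
      have hakm : a ≤ k-1 := by omega
      refine ⟨⟨k-1, hkm1⟩, by rw [hS, hmemIT k (k-1) hkm1]; omega, ?_⟩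
      have hstep := interval_step π a hakm hkm1
      rw [show k - 1 + 1 = k by omega] at hstep
      have habs := hmin' (k-1) (by rw [Finset.mem_Icc]; omega)
      have h1 : mass π (intervalFromTo n a k) - 1/2
          ≤ |mass π (intervalFromTo n a (k-1)) - 1/2| := le_trans (le_abs_self _) habs
      rcases abs_cases (mass π (intervalFromTo n a (k-1)) - 1/2) with ⟨heq, _⟩ | ⟨heq, _⟩ <;>
        rw [heq] at h1
      · linarith [hpos (⟨k-1, hkm1⟩ : Fin n)]
      · linarith
  · -- pivot 2
    intro hhalfQ
    rw [hQ] at hhalfQ ⊢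
    rcases eq_or_lt_of_le hhalfQ with heq | hlt
    · obtain ⟨j, hj⟩ := hnotuniv
      refine ⟨j, by rw [hS]; exact hj, by linarith [hpos j]⟩
    · have hklt : k < n := by
        by_contra h
        have := hknle (by omega)
        linarith
      refine ⟨⟨k, hklt⟩, ?_, ?_⟩
      · rw [hS, hmemIT k k hklt]
        omega
      · have hstep := interval_step π a (by omega : a ≤ k) hklt
        have habs := hmin' (k+1) (by rw [Finset.mem_Icc]; omega)
        have h1 : 1/2 - mass π (intervalFromTo n a k)
            ≤ |mass π (intervalFromTo n a (k+1)) - 1/2| := by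
          refine le_trans ?_ habs
          rw [abs_sub_comm]
          exact le_abs_self _
        rcases abs_cases (mass π (intervalFromTo n a (k+1)) - 1/2) with ⟨heq, _⟩ | ⟨heq, _⟩ <;>
          rw [heq] at h1
        · linarith
        · linarith [hpos (⟨k, hklt⟩ : Fin n)]
  · -- singleton
    rintro ⟨i0, hi0⟩
    have hbin : ∀ (j : Fin n), hset n L L (j:ℕ) = {j} := by
      intro j
      unfold hset intervalFromTo
      ext i
      simp only [Finset.mem_filter, Finset.mem_univ, true_and, Finset.mem_singleton,
        Fin.ext_iff, Nat.sub_self, pow_zero, mul_one]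
      omega
    have hLl : l = L := by
      refine le_antisymm hlL (hdeep L le_rfl (i0:ℕ) (by rw [← hL]; exact i0.isLt) ?_)
      rw [hbin i0]
      unfold mass
      rw [Finset.sum_singleton]
      exact hi0
    rw [hLl] at hm hhalf hargm
    have ha' : a = m := by rw [ha, hLl]; simp
    have hmn : m < n := by rw [hL]; exact hm
    have hbinm : hset n L L m = {(⟨m, hmn⟩ : Fin n)} := by
      have := hbin ⟨m, hmn⟩
      simpa using this
    have hsa : π (⟨m, hmn⟩ : Fin n) = mass π (hset n L L m) := by
      rw [hbinm]
      unfold mass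
      rw [Finset.sum_singleton]
    have hs2 : 1/2 ≤ π (⟨m, hmn⟩ : Fin n) := by rw [hsa]; exact hhalf
    have hmax : ∀ i, π i ≤ π (⟨m, hmn⟩ : Fin n) := by
      intro i
      have h := hargm (i:ℕ) (by rw [← hL]; exact i.isLt)
      rw [hbin i] at h
      unfold mass at h
      rw [Finset.sum_singleton] at h
      rw [hsa]
      exact h
    have hpa : π (⟨a, halt⟩ : Fin n) = π (⟨m, hmn⟩ : Fin n) := by
      congr 1
      exact Fin.ext (by simp [ha'])
    have hk1 : k = a + 1 := by
      by_contra hne1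
      have hk2 : a + 2 ≤ k := by omega
      have ha1n : a + 1 < n := by omega
      have hstep2 := interval_step π a (by omega : a ≤ a+1) ha1n
      have hmono := interval_mono π hpos a hk2
      have habs := hmin' (a+1) (by rw [Finset.mem_Icc]; omega)
      have habs1 : |mass π (intervalFromTo n a (a+1)) - 1/2|
          = mass π (intervalFromTo n a (a+1)) - 1/2 := by
        apply abs_of_nonneg
        rw [hea, hpa]
        linarith
      have h1 : mass π (intervalFromTo n a k) - 1/2
          ≤ mass π (intervalFromTo n a (a+1)) - 1/2 := by
        rw [← habs1]
        exact le_trans (le_abs_self _) habs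
      have h2 : mass π (intervalFromTo n a (a+1+1)) ≤ mass π (intervalFromTo n a k) :=
        interval_mono π hpos a hk2
      linarith [hpos (⟨a+1, ha1n⟩ : Fin n)]
    refine ⟨⟨m, hmn⟩, ?_, hmax⟩
    rw [hS, hk1]
    ext i
    simp only [intervalFromTo, Finset.mem_filter, Finset.mem_univ, true_and,
      Finset.mem_singleton, Fin.ext_iff]
    omega

end Strat
end SearchPaper


namespace SearchPaper
open Finset
variable {n : ℕ}
section Final

lemma singleton_EJS (hn : 2 ≤ n) (p : ℝ → ℝ) (s : Fin n) (π : Fin n → ℝ)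
    (hpos : ∀ i, 0 < π i) (hsum : ∑ i, π i = 1)
    (hcp0 : 0 < crossover p n {s}) (hcp1 : crossover p n {s} < 1/2) :
    π s * C1 (crossover p n {s}) ≤ EJS p {s} π := by
  set cp := crossover p n ({s} : Finset (Fin n)) with hcpdef
  have hcp1' : cp < 1 := by linarith
  have hlt1 := pi_lt_one hn hpos hsum
  have h1pi : ∀ i : Fin n, 0 < 1 - π i := fun i => by linarith [hlt1 i]
  have hEJS : EJS p {s} π = ∑ i, π i *
      klFin (fun y => lik cp (decide (i ∈ ({s} : Finset (Fin n)))) y)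
        (fun y => ∑ j ∈ univ.erase i,
          π j / (1 - π i) * lik cp (decide (j ∈ ({s} : Finset (Fin n)))) y) := rfl
  have hterm : π s * klFin (fun y => lik cp (decide (s ∈ ({s} : Finset (Fin n)))) y)
      (fun y => ∑ j ∈ univ.erase s,
        π j / (1 - π s) * lik cp (decide (j ∈ ({s} : Finset (Fin n)))) y)
      = π s * C1 cp := by
    obtain ⟨t, ht0, ht1, htval, hklf⟩ := klFin_term hn hcp0 hcp1' {s} π hpos hsum s
    rw [hklf]
    have hmem : s ∈ ({s} : Finset (Fin n)) := Finset.mem_singleton_self s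
    have hEt : ∑ j ∈ univ.erase s, π j * lik cp (decide (j ∈ ({s} : Finset (Fin n)))) true
        = cp * (1 - π s) := by
      have e : ∀ j ∈ univ.erase s,
          π j * lik cp (decide (j ∈ ({s} : Finset (Fin n)))) true = cp * π j := by
        intro j hj
        rw [lik_not_mem (Finset.notMem_singleton.2 (Finset.mem_erase.1 hj).1)]
        ring
      rw [Finset.sum_congr rfl e, ← Finset.mul_sum,
        Finset.sum_erase_eq_sub (Finset.mem_univ s), hsum]
    have htcp : t = cp :=
      mul_right_cancel₀ (h1pi s).ne' (htval.trans hEt)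
    rw [htcp, lik_mem hmem, klBern_one_sub_self]
  rw [hEJS, ← hterm]
  refine Finset.single_le_sum (f := fun i => π i *
      klFin (fun y => lik cp (decide (i ∈ ({s} : Finset (Fin n)))) y)
        (fun y => ∑ j ∈ univ.erase i,
          π j / (1 - π i) * lik cp (decide (j ∈ ({s} : Finset (Fin n)))) y))
    (fun i _ => ?_) (Finset.mem_univ s)
  obtain ⟨t, ht0, ht1, _, hklf⟩ := klFin_term hn hcp0 hcp1' {s} π hpos hsum i
  rw [hklf]
  apply mul_nonneg (hpos i).le
  by_cases his : i ∈ ({s} : Finset (Fin n))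
  · rw [lik_mem his]
    exact klBern_nonneg (by linarith) (by linarith) ht0 ht1
  · rw [lik_not_mem his]
    exact klBern_nonneg hcp0 hcp1' ht0 ht1

lemma posterior_inv (hn : 2 ≤ n) (p : ℝ → ℝ) (hp : NoiseOK p)
    {γ : (Fin n → ℝ) → Finset (Fin n)} (hγ : StratOK γ) (y : ℕ → Bool) :
    ∀ t, (∀ i, 0 < posterior p γ y t i) ∧ (∑ i, posterior p γ y t i) = 1 := by
  have hne : Nonempty (Fin n) := ⟨⟨0, by omega⟩⟩
  intro t
  induction t with
  | zero =>
    constructor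
    · intro i
      show (0:ℝ) < (n:ℝ)⁻¹
      have : (0:ℝ) < n := by exact_mod_cast (by omega : 0 < n)
      positivity
    · show ∑ _i : Fin n, (n:ℝ)⁻¹ = 1
      rw [Finset.sum_const, Finset.card_univ, Fintype.card_fin, nsmul_eq_mul]
      have : (n:ℝ) ≠ 0 := by exact_mod_cast (by omega : n ≠ 0)
      field_simp
  | succ t ih =>
    obtain ⟨hpos, hsum⟩ := ih
    obtain ⟨⟨hc1, hc2⟩, _⟩ := hγ (posterior p γ y t) hpos hsum
    have hn0 : (0:ℝ) < n := by exact_mod_cast (by omega : 0 < n)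
    have hcp : crossover p n (γ (posterior p γ y t)) ∈ Set.Ioo (0:ℝ) (1/2) := by
      refine hp.1 _ ⟨?_, ?_⟩
      · apply div_pos _ hn0
        exact_mod_cast hc1
      · rw [div_lt_one hn0]
        exact_mod_cast (by omega : (γ (posterior p γ y t)).card < n)
    have hlik : ∀ x y', 0 < lik (crossover p n (γ (posterior p γ y t))) x y' :=
      fun x y' => lik_pos hcp.1 (by have := hcp.2; linarith) x y'
    have hobs : 0 < obsProb p (γ (posterior p γ y t)) (posterior p γ y t) (y t) :=
      Finset.sum_pos (fun i _ => mul_pos (hpos i) (hlik _ _)) Finset.univ_nonempty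
    constructor
    · intro i
      show 0 < bayesUpdate p (γ (posterior p γ y t)) (posterior p γ y t) (y t) i
      unfold bayesUpdate
      exact div_pos (mul_pos (hpos i) (hlik _ _)) hobs
    · show ∑ i, bayesUpdate p (γ (posterior p γ y t)) (posterior p γ y t) (y t) i = 1
      unfold bayesUpdate
      rw [← Finset.sum_div]
      rw [show ∑ i, posterior p γ y t i *
          lik (crossover p n (γ (posterior p γ y t)))
            (decide (i ∈ γ (posterior p γ y t))) (y t)
          = obsProb p (γ (posterior p γ y t)) (posterior p γ y t) (y t) from rfl]
      exact div_self hobs.ne'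

end Final
end SearchPaper


open SearchPaper in
/-- Lemma: EJS lower bounds for `sortPM` and `dyaPM`. Under either the
`sortPM` or the `dyaPM` strategy with resolution `1/δ` and reliability `ε`, for every time
`t`, `EJS(π(t), γ) ≥ I(1/2, p(δ|S_{t+1}|))`, and whenever `max_i π_i(t) ≥ π̃` also
`EJS(π(t), γ) ≥ π̃ C₁(p(δ))`, where `π̃ = 1 - 1/(1 + max{log(1/δ), log(1/ε)})`. -/
theorem statement7 (p : ℝ → ℝ) (hp : NoiseOK p) (n : ℕ) (hn : 2 ≤ n)
    (ε : ℝ) (hε0 : 0 < ε) (hε1 : ε < 1)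
    (γ : (Fin n → ℝ) → Finset (Fin n))
    (hγ : IsSortPM γ ∨ ∃ L : ℕ, n = 2 ^ L ∧ IsDyaPM L γ)
    (y : ℕ → Bool) (t : ℕ) :
    mutInfo (1 / 2) (crossover p n (γ (posterior p γ y t))) ≤
        EJS p (γ (posterior p γ y t)) (posterior p γ y t) ∧
      ((∃ i, piTilde n ε ≤ posterior p γ y t i) →
        piTilde n ε * C1 (p ((n : ℝ)⁻¹)) ≤
          EJS p (γ (posterior p γ y t)) (posterior p γ y t)) := by
  have hstrat : StratOK γ := by
    rcases hγ with h | ⟨L, hL, h⟩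
    · exact sortPM_ok hn h
    · exact dyaPM_ok hn hL h
  obtain ⟨hpos, hsum⟩ := posterior_inv hn p hp hstrat y t
  obtain ⟨⟨hc1, hc2⟩, hpiv1, hpiv2, hsingle⟩ := hstrat (posterior p γ y t) hpos hsum
  have hn0 : (0:ℝ) < n := by exact_mod_cast (by omega : 0 < n)
  have hcp : crossover p n (γ (posterior p γ y t)) ∈ Set.Ioo (0:ℝ) (1/2) := by
    refine hp.1 _ ⟨?_, ?_⟩
    · apply div_pos _ hn0
      exact_mod_cast hc1
    · rw [div_lt_one hn0]
      exact_mod_cast (by omega : (γ (posterior p γ y t)).card < n)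
  constructor
  · exact core_EJS hn p _ _ hpos hsum hcp.1 hcp.2 hpiv1 hpiv2
  · rintro ⟨i, hi⟩
    have hhalf : ∃ i, 1/2 ≤ posterior p γ y t i := by
      rcases le_or_gt (1/2 : ℝ) (piTilde n ε) with h12 | h12
      · exact ⟨i, le_trans h12 hi⟩
      · by_contra hcon
        push_neg at hcon
        set M := max (Real.log n) (Real.log (1/ε)) with hM
        have hM0 : 0 < M :=
          lt_of_lt_of_le (Real.log_pos (by exact_mod_cast (by omega : 1 < n)))
            (le_max_left _ _)
        have h1M : 0 < 1 + M := by linarith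
        have hinv : (1 + M) * (1/(1 + M)) = 1 := mul_one_div_cancel h1M.ne'
        have hMlt : M < 1 := by
          unfold piTilde at h12
          rw [← hM] at h12
          nlinarith [mul_pos h1M (show (0:ℝ) < 1/(1+M) - 1/2 by linarith), hinv]
        have hlogn : Real.log n < 1 := lt_of_le_of_lt (le_max_left _ _) hMlt
        have hn3 : (n:ℝ) < 3 := by
          have h1 : (n:ℝ) < Real.exp 1 := (Real.log_lt_iff_lt_exp (by positivity)).1 hlogn
          have h2 : Real.exp 1 < 2.7182818286 := Real.exp_one_lt_d9
          linarith
        have hn2 : n = 2 := by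
          have h4 : n < 3 := by exact_mod_cast hn3
          omega
        have hneF : Nonempty (Fin n) := ⟨⟨0, by omega⟩⟩
        have hlt := Finset.sum_lt_sum_of_nonempty (Finset.univ_nonempty (α := Fin n))
          (g := fun _ => (1/2 : ℝ)) (fun i _ => hcon i)
        rw [hsum, Finset.sum_const, Finset.card_univ, Fintype.card_fin, nsmul_eq_mul,
          hn2] at hlt
        norm_num at hlt
    obtain ⟨s, hSs, hmax⟩ := hsingle hhalf
    have hπs : piTilde n ε ≤ posterior p γ y t s := le_trans hi (hmax i)
    rw [hSs]
    have hcps : crossover p n ({s} : Finset (Fin n)) = p ((n:ℝ)⁻¹) := by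
      simp [crossover, one_div]
    have hio : p ((n:ℝ)⁻¹) ∈ Set.Ioo (0:ℝ) (1/2) := by
      refine hp.1 _ ⟨by positivity, ?_⟩
      exact inv_lt_one_of_one_lt₀ (by exact_mod_cast (by omega : 1 < n))
    have hEb := singleton_EJS hn p s (posterior p γ y t) hpos hsum
      (by rw [hcps]; exact hio.1) (by rw [hcps]; exact hio.2)
    rw [hcps] at hEb
    have hC1 : 0 ≤ C1 (p ((n:ℝ)⁻¹)) := by
      unfold C1
      exact klBern_nonneg hio.1 (by linarith [hio.2]) (by linarith [hio.2])
        (by linarith [hio.1])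
    calc piTilde n ε * C1 (p ((n:ℝ)⁻¹))
        ≤ posterior p γ y t s * C1 (p ((n:ℝ)⁻¹)) :=
          mul_le_mul_of_nonneg_right hπs hC1
      _ ≤ EJS p {s} (posterior p γ y t) := hEb
end

section
/- Let 0 < p < 1/2 and set B₁ = Bern(1−p), B₀ = Bern(p). Define f(ρ) = ρ·D(B₁ ‖ (3/4)B₁ + (1/4)B₀) and g(ρ) = (1/2−ρ)·D((1−4ρ)B₁ + 4ρB₀ ‖ (1/2+ρ)B₁ + (1/2−ρ)B₀). Then f is positive and increasing on (0,1/2], g(0) > 0, and consequently min_{ρ∈(0,1/4]} max{f(ρ), g(ρ)} > 0 and min_{ρ∈(1/4,1/2]} f(ρ) > 0; in particular K_d = min{ min_{ρ∈[0,1/4]} max{f(ρ), g(ρ)}, min_{ρ∈[1/4,1/2]} f(ρ), (1/4)·D((1/4)B₁ + (3/4)B₀ ‖ B₀) } > 0. -/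
open MeasureTheory Filter

private lemma klBern_pos' {a b : ℝ} (ha0 : 0 < a) (ha1 : a < 1) (hb0 : 0 < b) (hb1 : b < 1)
    (hab : a ≠ b) : 0 < SearchPaper.klBern a b := by
  have h1 : a * Real.log (b / a) < b - a := by
    have hba : b / a ≠ 1 := by
      intro h; exact hab ((div_eq_one_iff_eq ha0.ne').mp h).symm
    have := Real.log_lt_sub_one_of_pos (div_pos hb0 ha0) hba
    have := mul_lt_mul_of_pos_left this ha0
    calc a * Real.log (b / a) < a * (b / a - 1) := this
      _ = b - a := by field_simp
  have h2 : (1 - a) * Real.log ((1 - b) / (1 - a)) < a - b := by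
    have h1a : (0:ℝ) < 1 - a := by linarith
    have h1b : (0:ℝ) < 1 - b := by linarith
    have hba : (1 - b) / (1 - a) ≠ 1 := by
      intro h; have := (div_eq_one_iff_eq h1a.ne').mp h; apply hab; linarith
    have := Real.log_lt_sub_one_of_pos (div_pos h1b h1a) hba
    have := mul_lt_mul_of_pos_left this h1a
    calc (1 - a) * Real.log ((1 - b) / (1 - a)) < (1 - a) * ((1 - b) / (1 - a) - 1) := this
      _ = a - b := by field_simp; ring
  have e1 : Real.log (a / b) = - Real.log (b / a) := by
    rw [Real.log_div ha0.ne' hb0.ne', Real.log_div hb0.ne' ha0.ne']; ring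
  have e2 : Real.log ((1 - a) / (1 - b)) = - Real.log ((1 - b) / (1 - a)) := by
    rw [Real.log_div (by linarith) (by linarith), Real.log_div (by linarith) (by linarith)]; ring
  unfold SearchPaper.klBern
  rw [e1, e2]
  nlinarith

private lemma continuousAt_klBern2 {f g : ℝ → ℝ} {x : ℝ} (hf : ContinuousAt f x)
    (hg : ContinuousAt g x) (h1 : f x ≠ 0) (h2 : g x ≠ 0) (h3 : (1:ℝ) - f x ≠ 0)
    (h4 : (1:ℝ) - g x ≠ 0) :
    ContinuousAt (fun ρ => SearchPaper.klBern (f ρ) (g ρ)) x := by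
  unfold SearchPaper.klBern
  have hf' : ContinuousAt (fun ρ => 1 - f ρ) x := continuousAt_const.sub hf
  have hg' : ContinuousAt (fun ρ => 1 - g ρ) x := continuousAt_const.sub hg
  exact (hf.mul ((hf.div hg h2).log (div_ne_zero h1 h2))).add
    (hf'.mul ((hf'.div hg' h4).log (div_ne_zero h3 h4)))

open SearchPaper in
/-- Positivity of `K_d`. Let `0 < p < 1/2`, `B₁ = Bern(1-p)`,
`B₀ = Bern(p)`, `f(ρ) = ρ D(B₁ ‖ (3/4)B₁ + (1/4)B₀)` and
`g(ρ) = (1/2-ρ) D((1-4ρ)B₁ + 4ρB₀ ‖ (1/2+ρ)B₁ + (1/2-ρ)B₀)`. Then `f` is positive and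
increasing on `(0,1/2]`, `g(0) > 0`, consequently `min_{ρ∈(0,1/4]} max{f,g} > 0` and
`min_{ρ∈(1/4,1/2]} f > 0`; in particular `K_d > 0`. -/
theorem statement13 (q : ℝ) (hq0 : 0 < q) (hq1 : q < 1 / 2) :
    (∀ ρ ∈ Set.Ioc (0 : ℝ) (1 / 2), 0 < fK q ρ) ∧
      StrictMonoOn (fK q) (Set.Ioc (0 : ℝ) (1 / 2)) ∧
      0 < gK q 0 ∧
      0 < sInf ((fun ρ => max (fK q ρ) (gK q ρ)) '' Set.Ioc (0 : ℝ) (1 / 4)) ∧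
      0 < sInf (fK q '' Set.Ioc (1 / 4 : ℝ) (1 / 2)) ∧
      0 < min (sInf ((fun ρ => max (fK q ρ) (gK q ρ)) '' Set.Icc (0 : ℝ) (1 / 4)))
          (min (sInf (fK q '' Set.Icc (1 / 4 : ℝ) (1 / 2)))
            (1 / 4 * klBern (1 / 4 * (1 - q) + 3 / 4 * q) q)) := by
  have hC : 0 < klBern (1 - q) (3 / 4 * (1 - q) + 1 / 4 * q) :=
    klBern_pos' (by linarith) (by linarith) (by linarith) (by linarith) (by intro h; linarith)
  have hfK : ∀ ρ : ℝ, fK q ρ = ρ * klBern (1 - q) (3 / 4 * (1 - q) + 1 / 4 * q) := fun _ => rfl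
  have hfpos : ∀ ρ ∈ Set.Ioc (0 : ℝ) (1 / 2), 0 < fK q ρ := by
    intro ρ hρ; rw [hfK]; exact mul_pos hρ.1 hC
  have hmono : StrictMonoOn (fK q) (Set.Ioc (0 : ℝ) (1 / 2)) := by
    intro a _ b _ hab
    rw [hfK, hfK]
    exact mul_lt_mul_of_pos_right hab hC
  -- gK at 0
  have hg0eq : gK q 0 = 1 / 2 * klBern (1 - q) (1 / 2) := by
    have h1 : (1 - 4 * (0:ℝ)) * (1 - q) + 4 * 0 * q = 1 - q := by ring
    have h2 : (1 / 2 + (0:ℝ)) * (1 - q) + (1 / 2 - 0) * q = 1 / 2 := by ring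
    unfold gK; rw [h1, h2]; ring
  have hg0 : 0 < gK q 0 := by
    rw [hg0eq]
    have := klBern_pos' (a := 1 - q) (b := 1 / 2) (by linarith) (by linarith) (by norm_num)
      (by norm_num) (by intro h; linarith)
    linarith
  -- continuity of gK at 0
  have hcont : ContinuousAt (gK q) 0 := by
    unfold gK
    apply ContinuousAt.mul (by fun_prop)
    apply continuousAt_klBern2 (by fun_prop) (by fun_prop)
    · show (1 - 4 * (0:ℝ)) * (1 - q) + 4 * 0 * q ≠ 0; intro h; nlinarith
    · show (1 / 2 + (0:ℝ)) * (1 - q) + (1 / 2 - 0) * q ≠ 0; intro h; nlinarith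
    · show (1:ℝ) - ((1 - 4 * (0:ℝ)) * (1 - q) + 4 * 0 * q) ≠ 0; intro h; nlinarith
    · show (1:ℝ) - ((1 / 2 + (0:ℝ)) * (1 - q) + (1 / 2 - 0) * q) ≠ 0; intro h; nlinarith
  obtain ⟨δ, hδpos, hball⟩ := Metric.mem_nhds_iff.mp
    (hcont (Ioi_mem_nhds (by linarith : gK q 0 / 2 < gK q 0)))
  set ρ₀ : ℝ := min (δ / 2) (1 / 4) with hρ₀def
  have hρ₀pos : 0 < ρ₀ := lt_min (by linarith) (by norm_num)
  set m : ℝ := min (ρ₀ * klBern (1 - q) (3 / 4 * (1 - q) + 1 / 4 * q)) (gK q 0 / 2) with hmdef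
  have hmpos : 0 < m := lt_min (mul_pos hρ₀pos hC) (by linarith)
  have hbound : ∀ ρ ∈ Set.Icc (0 : ℝ) (1 / 4), m ≤ max (fK q ρ) (gK q ρ) := by
    intro ρ hρ
    rcases le_or_gt ρ ρ₀ with h | h
    · have hmem : ρ ∈ Metric.ball (0 : ℝ) δ := by
        rw [Metric.mem_ball, Real.dist_eq, sub_zero, abs_of_nonneg hρ.1]
        have : ρ₀ ≤ δ / 2 := min_le_left _ _
        linarith
      have := hball hmem
      simp only [Set.mem_preimage, Set.mem_Ioi] at this
      exact le_max_of_le_right (le_of_lt (lt_of_le_of_lt (min_le_right _ _) this))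
    · refine le_max_of_le_left ?_
      rw [hfK]
      calc m ≤ ρ₀ * klBern (1 - q) (3 / 4 * (1 - q) + 1 / 4 * q) := min_le_left _ _
        _ ≤ ρ * klBern (1 - q) (3 / 4 * (1 - q) + 1 / 4 * q) := by nlinarith
  have hIoc_sub : Set.Ioc (0 : ℝ) (1 / 4) ⊆ Set.Icc (0 : ℝ) (1 / 4) := Set.Ioc_subset_Icc_self
  have hinf1 : 0 < sInf ((fun ρ => max (fK q ρ) (gK q ρ)) '' Set.Ioc (0 : ℝ) (1 / 4)) := by
    refine lt_of_lt_of_le hmpos (le_csInf ⟨_, ⟨1/4, by norm_num, rfl⟩⟩ ?_)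
    rintro b ⟨ρ, hρ, rfl⟩
    exact hbound ρ (hIoc_sub hρ)
  have hinf1' : 0 < sInf ((fun ρ => max (fK q ρ) (gK q ρ)) '' Set.Icc (0 : ℝ) (1 / 4)) := by
    refine lt_of_lt_of_le hmpos (le_csInf ⟨_, ⟨0, by norm_num, rfl⟩⟩ ?_)
    rintro b ⟨ρ, hρ, rfl⟩
    exact hbound ρ hρ
  have hfbound : ∀ ρ ∈ Set.Icc (1 / 4 : ℝ) (1 / 2),
      1 / 4 * klBern (1 - q) (3 / 4 * (1 - q) + 1 / 4 * q) ≤ fK q ρ := by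
    intro ρ hρ; rw [hfK]; nlinarith [hρ.1]
  have hinf2 : 0 < sInf (fK q '' Set.Ioc (1 / 4 : ℝ) (1 / 2)) := by
    refine lt_of_lt_of_le (by positivity : (0:ℝ) < 1 / 4 * klBern (1 - q) (3 / 4 * (1 - q) + 1 / 4 * q))
      (le_csInf ⟨_, ⟨1/2, by norm_num, rfl⟩⟩ ?_)
    rintro b ⟨ρ, hρ, rfl⟩
    exact hfbound ρ (Set.Ioc_subset_Icc_self hρ)
  have hinf2' : 0 < sInf (fK q '' Set.Icc (1 / 4 : ℝ) (1 / 2)) := by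
    refine lt_of_lt_of_le (by positivity : (0:ℝ) < 1 / 4 * klBern (1 - q) (3 / 4 * (1 - q) + 1 / 4 * q))
      (le_csInf ⟨_, ⟨1/4, by norm_num, rfl⟩⟩ ?_)
    rintro b ⟨ρ, hρ, rfl⟩
    exact hfbound ρ hρ
  have hlast : 0 < 1 / 4 * klBern (1 / 4 * (1 - q) + 3 / 4 * q) q := by
    have := klBern_pos' (a := 1 / 4 * (1 - q) + 3 / 4 * q) (b := q) (by linarith) (by linarith)
      hq0 (by linarith) (by intro h; linarith)
    linarith
  exact ⟨hfpos, hmono, hg0, hinf1, hinf2, lt_min hinf1' (lt_min hinf2' hlast)⟩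
end

section
/- Let π = (π₁,...,π_n) be a probability vector with π_i ∈ (0,1) for all i, and let P₁,...,P_n be probability distributions on a finite set Y with P_i(y) > 0 for all i and y. Then the Extrinsic Jensen–Shannon divergence dominates the Jensen–Shannon divergence: Σ_i π_i·D(P_i ‖ Σ_{j≠i} (π_j/(1−π_i))·P_j) ≥ Σ_i π_i·D(P_i ‖ Σ_j π_j·P_j). -/
open MeasureTheory Filter

open SearchPaper in
private lemma gibbs {Y : Type*} [Fintype Y] (P Q : Y → ℝ)
    (hP : ∀ y, 0 < P y) (hQ : ∀ y, 0 < Q y)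
    (hPs : ∑ y, P y = 1) (hQs : ∑ y, Q y = 1) :
    0 ≤ klFin P Q := by
  have h : ∑ y, P y * Real.log (Q y / P y) ≤ 0 := by
    calc ∑ y, P y * Real.log (Q y / P y)
        ≤ ∑ y, P y * (Q y / P y - 1) := by
          refine Finset.sum_le_sum fun y _ => ?_
          exact mul_le_mul_of_nonneg_left
            (Real.log_le_sub_one_of_pos (div_pos (hQ y) (hP y))) (hP y).le
      _ = ∑ y, (Q y - P y) := by
          refine Finset.sum_congr rfl fun y _ => ?_
          rw [mul_sub, mul_one, mul_div_cancel₀ _ (hP y).ne']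
      _ = 0 := by rw [Finset.sum_sub_distrib, hPs, hQs]; ring
  have heq : klFin P Q = -∑ y, P y * Real.log (Q y / P y) := by
    rw [klFin, ← Finset.sum_neg_distrib]
    refine Finset.sum_congr rfl fun y _ => ?_
    rw [Real.log_div (hP y).ne' (hQ y).ne', Real.log_div (hQ y).ne' (hP y).ne']
    ring
  rw [heq]
  linarith


open SearchPaper in
/-- EJS dominates JS. For a probability vector `π` with entries in
`(0,1)` and probability distributions `P₁,...,P_n` on a finite set `Y` with positive
mass everywhere,
`∑_i π_i D(P_i ‖ ∑_{j≠i} (π_j/(1-π_i)) P_j) ≥ ∑_i π_i D(P_i ‖ ∑_j π_j P_j)`. -/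
theorem statement15 {m : ℕ} {Y : Type*} [Fintype Y]
    (π : Fin m → ℝ) (P : Fin m → Y → ℝ)
    (hπ : ∀ i, π i ∈ Set.Ioo (0 : ℝ) 1) (hπsum : ∑ i, π i = 1)
    (hP : ∀ i y, 0 < P i y) (hPsum : ∀ i, ∑ y, P i y = 1) :
    ∑ i, π i * klFin (P i) (fun y => ∑ j ∈ Finset.univ.erase i, π j / (1 - π i) * P j y) ≥
      ∑ i, π i * klFin (P i) (fun y => ∑ j, π j * P j y) := by
  classical
  -- abbreviations
  set Q : Y → ℝ := fun y => ∑ j, π j * P j y with hQdef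
  have hne : ∀ i : Fin m, (Finset.univ.erase i).Nonempty := by
    intro i
    by_contra h
    rw [Finset.not_nonempty_iff_eq_empty] at h
    have : (Finset.univ : Finset (Fin m)) = {i} := by
      ext j
      simp only [Finset.mem_univ, Finset.mem_singleton, true_iff]
      by_contra hj
      exact Finset.notMem_empty j (h ▸ Finset.mem_erase.mpr ⟨hj, Finset.mem_univ j⟩)
    have : π i = 1 := by rw [← hπsum, this, Finset.sum_singleton]
    exact absurd this (ne_of_lt (hπ i).2)
  have h1πi : ∀ i : Fin m, 0 < 1 - π i := fun i => by linarith [(hπ i).2]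
  refine Finset.sum_le_sum fun i _ => mul_le_mul_of_nonneg_left ?_ (hπ i).1.le
  set R : Y → ℝ := fun y => ∑ j ∈ Finset.univ.erase i, π j / (1 - π i) * P j y with hRdef
  have hRpos : ∀ y, 0 < R y := by
    intro y
    refine Finset.sum_pos (fun j _ => ?_) (hne i)
    exact mul_pos (div_pos (hπ j).1 (h1πi i)) (hP j y)
  haveI : Nonempty (Fin m) := ⟨i⟩
  have hQpos : ∀ y, 0 < Q y :=
    fun y => Finset.sum_pos (fun j _ => mul_pos (hπ j).1 (hP j y)) Finset.univ_nonempty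
  have hQsplit : ∀ y, Q y = π i * P i y + (1 - π i) * R y := by
    intro y
    have h2 : (1 - π i) * R y = ∑ j ∈ Finset.univ.erase i, π j * P j y := by
      rw [hRdef, Finset.mul_sum]
      refine Finset.sum_congr rfl fun j _ => ?_
      field_simp
      rw [mul_assoc]
      exact mul_div_cancel_left₀ _ (h1πi i).ne'
    have h3 : Q y = π i * P i y + ∑ j ∈ Finset.univ.erase i, π j * P j y :=
      (Finset.add_sum_erase Finset.univ (fun j => π j * P j y) (Finset.mem_univ i)).symm
    rw [h3, h2]
  have hRsum : ∑ y, R y = 1 := by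
    have : ∑ y, R y = ∑ j ∈ Finset.univ.erase i, π j / (1 - π i) := by
      rw [Finset.sum_comm]
      refine Finset.sum_congr rfl fun j _ => ?_
      rw [← Finset.mul_sum, hPsum j, mul_one]
    rw [this, ← Finset.sum_div]
    have : ∑ j ∈ Finset.univ.erase i, π j = 1 - π i := by
      have := Finset.add_sum_erase Finset.univ π (Finset.mem_univ i)
      rw [hπsum] at this
      linarith
    rw [this, div_self (h1πi i).ne']
  -- pointwise log concavity
  have key : ∀ y, Real.log (P i y / Q y) ≤ (1 - π i) * Real.log (P i y / R y) := by
    intro y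
    have hconc := (strictConcaveOn_log_Ioi.concaveOn).2 (Set.mem_Ioi.mpr (hP i y))
      (Set.mem_Ioi.mpr (hRpos y)) (hπ i).1.le (h1πi i).le (by ring)
    simp only [smul_eq_mul] at hconc
    rw [Real.log_div (hP i y).ne' (hQpos y).ne', Real.log_div (hP i y).ne' (hRpos y).ne']
    have : Real.log (Q y) = Real.log (π i * P i y + (1 - π i) * R y) := by rw [hQsplit y]
    rw [this]
    nlinarith [hconc]
  have step1 : klFin (P i) Q ≤ (1 - π i) * klFin (P i) R := by
    rw [klFin, klFin, Finset.mul_sum]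
    refine Finset.sum_le_sum fun y _ => ?_
    calc P i y * Real.log (P i y / Q y)
        ≤ P i y * ((1 - π i) * Real.log (P i y / R y)) :=
          mul_le_mul_of_nonneg_left (key y) (hP i y).le
      _ = (1 - π i) * (P i y * Real.log (P i y / R y)) := by ring
  have step2 : 0 ≤ klFin (P i) R := gibbs (P i) R (hP i) hRpos (hPsum i) hRsum
  nlinarith [step1, step2, (hπ i).1, (hπ i).2]
end

section
/- Let π = (π₁,...,π_n) be a probability vector with π_i ∈ (0,1) for all i, and let P₁,...,P_n be probability distributions on a finite set Y with P_i(y) > 0 for all i and y. Let P(y) = Σ_i π_i·P_i(y), and for each y let π'(y) be the Bayes posterior π'_i(y) = π_i·P_i(y)/P(y). Then the expected one-step increase of the average log-likelihood equals the Extrinsic Jensen–Shannon divergence: Σ_y P(y)·U(π'(y)) = U(π) + Σ_i π_i·D(P_i ‖ Σ_{j≠i} (π_j/(1−π_i))·P_j). -/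
open MeasureTheory Filter

open SearchPaper in
/-- The expected one-step increase of the average log-likelihood equals
the EJS divergence. With `P̄(y) = ∑_i π_i P_i(y)` and Bayes posterior
`π'_i(y) = π_i P_i(y)/P̄(y)`,
`∑_y P̄(y) U(π'(y)) = U(π) + ∑_i π_i D(P_i ‖ ∑_{j≠i} (π_j/(1-π_i)) P_j)`. -/
theorem statement16 {m : ℕ} {Y : Type*} [Fintype Y]
    (π : Fin m → ℝ) (P : Fin m → Y → ℝ)
    (hπ : ∀ i, π i ∈ Set.Ioo (0 : ℝ) 1) (hπsum : ∑ i, π i = 1)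
    (hP : ∀ i y, 0 < P i y) (hPsum : ∀ i, ∑ y, P i y = 1) :
    ∑ y, (∑ i, π i * P i y) * avgLL (fun i => π i * P i y / ∑ j, π j * P j y) =
      avgLL π +
        ∑ i, π i * klFin (P i)
          (fun y => ∑ j ∈ Finset.univ.erase i, π j / (1 - π i) * P j y) := by
  have hne : (Finset.univ : Finset (Fin m)).Nonempty := by
    by_contra h
    rw [Finset.not_nonempty_iff_eq_empty] at h
    rw [h, Finset.sum_empty] at hπsum
    norm_num at hπsum
  set Pb : Y → ℝ := fun y => ∑ i, π i * P i y with hPb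
  have hPbpos : ∀ y, 0 < Pb y := fun y =>
    Finset.sum_pos (fun i _ => mul_pos (hπ i).1 (hP i y)) hne
  set Q : Fin m → Y → ℝ := fun i y => ∑ j ∈ Finset.univ.erase i, π j * P j y with hQ
  have h1π : ∀ i, 0 < 1 - π i := fun i => by linarith [(hπ i).2]
  have heraseNe : ∀ i : Fin m, (Finset.univ.erase i).Nonempty := by
    intro i
    rcases Finset.eq_empty_or_nonempty (Finset.univ.erase i) with h | h
    · exfalso
      have h2 := Finset.sum_erase_add Finset.univ π (Finset.mem_univ i)
      rw [h, Finset.sum_empty, zero_add, hπsum] at h2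
      linarith [(hπ i).2]
    · exact h
  have hQpos : ∀ i y, 0 < Q i y := fun i y =>
    Finset.sum_pos (fun j _ => mul_pos (hπ j).1 (hP j y)) (heraseNe i)
  have hQs : ∀ i y, Q i y = Pb y - π i * P i y := fun i y =>
    Finset.sum_erase_eq_sub (Finset.mem_univ i)
  have key : ∀ i y, Pb y * llr (π i * P i y / Pb y)
      = π i * P i y * (Real.log (π i * P i y) - Real.log (Q i y)) := by
    intro i y
    have ha : 0 < π i * P i y := mul_pos (hπ i).1 (hP i y)
    have h1 : 1 - π i * P i y / Pb y = Q i y / Pb y := by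
      rw [hQs i y, sub_div, div_self (hPbpos y).ne']
    rw [SearchPaper.llr, h1]
    have h2 : (π i * P i y / Pb y) / (Q i y / Pb y) = π i * P i y / Q i y := by
      rw [div_div_div_cancel_right₀ (hPbpos y).ne']
    rw [h2, Real.log_div ha.ne' (hQpos i y).ne']
    rw [div_mul_eq_mul_div, mul_div_assoc']
    exact mul_div_cancel_left₀ _ (hPbpos y).ne'
  have hQdiv : ∀ i y, (∑ j ∈ Finset.univ.erase i, π j / (1 - π i) * P j y)
      = Q i y / (1 - π i) := by
    intro i y
    rw [hQ, Finset.sum_div]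
    exact Finset.sum_congr rfl fun j _ => by ring
  have hkl : ∀ i, klFin (P i)
      (fun y => ∑ j ∈ Finset.univ.erase i, π j / (1 - π i) * P j y)
      = ∑ y, P i y * (Real.log (P i y) - Real.log (Q i y) + Real.log (1 - π i)) := by
    intro i
    rw [klFin]
    refine Finset.sum_congr rfl fun y _ => ?_
    rw [hQdiv, div_div_eq_mul_div,
      Real.log_div (mul_pos (hP i y) (h1π i)).ne' (hQpos i y).ne',
      Real.log_mul (hP i y).ne' (h1π i).ne']
    ring
  calc ∑ y, Pb y * avgLL (fun i => π i * P i y / Pb y)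
      = ∑ y, ∑ i, π i * P i y * (Real.log (π i * P i y) - Real.log (Q i y)) := by
        refine Finset.sum_congr rfl fun y _ => ?_
        rw [avgLL, Finset.mul_sum]
        exact Finset.sum_congr rfl fun i _ => key i y
    _ = ∑ i, ∑ y, π i * P i y * (Real.log (π i * P i y) - Real.log (Q i y)) :=
        Finset.sum_comm
    _ = avgLL π + ∑ i, π i * klFin (P i)
          (fun y => ∑ j ∈ Finset.univ.erase i, π j / (1 - π i) * P j y) := by
        rw [avgLL, ← Finset.sum_add_distrib]
        refine Finset.sum_congr rfl fun i _ => ?_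
        calc ∑ y, π i * P i y * (Real.log (π i * P i y) - Real.log (Q i y))
            = ∑ y, (P i y * (π i * (Real.log (π i) - Real.log (1 - π i)))
                + π i * (P i y * (Real.log (P i y) - Real.log (Q i y)
                    + Real.log (1 - π i)))) := by
              refine Finset.sum_congr rfl fun y _ => ?_
              rw [Real.log_mul (hπ i).1.ne' (hP i y).ne']
              ring
          _ = (∑ y, P i y) * (π i * (Real.log (π i) - Real.log (1 - π i)))
                + π i * ∑ y, P i y * (Real.log (P i y) - Real.log (Q i y)
                    + Real.log (1 - π i)) := by
              rw [Finset.sum_add_distrib, ← Finset.sum_mul, Finset.mul_sum]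
          _ = llr (π i) + π i * klFin (P i)
                (fun y => ∑ j ∈ Finset.univ.erase i, π j / (1 - π i) * P j y) := by
              rw [hPsum i, one_mul, SearchPaper.llr,
                Real.log_div (hπ i).1.ne' (h1π i).ne', hkl i]
end
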